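/- For each positive integer n, the number of pure (2n)-sparse gapsets of genus 3n+1 equals the number of pure (2n+1)-sparse gapsets of genus 3n+2. -/

import Mathlib

/-- A gapset: a finite set of positive integers such that whenever `z ∈ G`
and `z = x + y` with `x, y` positive, then `x ∈ G` or `y ∈ G`. -/
def IsGapset (G : Finset ℕ) : Prop :=
  0 ∉ G ∧ ∀ z ∈ G, ∀ x y : ℕ, 0 < x → 0 < y → z = x + y → x ∈ G ∨ y ∈ G

/-- The multiplicity of a gapset: the least positive integer not in `G`. -/
noncomputable def mult (G : Finset ℕ) : ℕ := sInf {s : ℕ | 0 < s ∧ s ∉ G}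

/-- `a` and `b` are consecutive elements of `G` (in the natural order). -/
def Consec (G : Finset ℕ) (a b : ℕ) : Prop :=
  a ∈ G ∧ b ∈ G ∧ a < b ∧ ∀ c ∈ G, c ≤ a ∨ b ≤ c

/-- `G` is pure `κ`-sparse: all consecutive differences are at most `κ`
and some consecutive difference equals `κ`. -/
def PureSparse (κ : ℕ) (G : Finset ℕ) : Prop :=
  (∀ a b, Consec G a b → b - a ≤ κ) ∧ (∃ a b, Consec G a b ∧ b - a = κ)

/-- The Frobenius number (largest element) of a gapset. -/
def frob (G : Finset ℕ) : ℕ := G.sup id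

/-- The depth of a gapset: `⌈c/m⌉` where `c = frob G + 1` is the conductor. -/
noncomputable def depth (G : Finset ℕ) : ℕ := (frob G + mult G) / mult G

/-- `x` is a pseudo-Frobenius number of `G`. -/
def PseudoFrob (G : Finset ℕ) (x : ℕ) : Prop :=
  x ∈ G ∧ ∀ s : ℕ, 0 < s → s ∉ G → x + s ∉ G

namespace S19

lemma le_frob {G : Finset ℕ} {ℓ : ℕ} (h : ℓ ∈ G) : ℓ ≤ frob G := Finset.le_sup (f := id) h

lemma frob_mem {G : Finset ℕ} (h : G.Nonempty) : frob G ∈ G := by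
  obtain ⟨a, ha, hval⟩ := Finset.exists_mem_eq_sup G h id
  rw [frob, hval]; exact ha

lemma frob_le_two_card {G : Finset ℕ} (hG : IsGapset G) (hne : G.Nonempty) :
    frob G + 1 ≤ 2 * G.card := by
  classical
  set F := frob G with hF
  have hFmem : F ∈ G := frob_mem hne
  have key : (Finset.Icc 1 (F/2)).card ≤ (G.erase F).card := by
    apply Finset.card_le_card_of_injOn (fun p => if p ∈ G then p else F - p)
    · intro p hp
      simp only [Finset.coe_Icc, Set.mem_Icc] at hp
      by_cases h : p ∈ G
      · simp only [h, if_true]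
        exact Finset.mem_erase.mpr ⟨by omega, h⟩
      · have hor := hG.2 F hFmem p (F - p) (by omega) (by omega) (by omega)
        have hFp : F - p ∈ G := by tauto
        simp only [h, if_false]
        exact Finset.mem_erase.mpr ⟨by omega, hFp⟩
    · intro p hp q hq heq
      simp only [Finset.coe_Icc, Set.mem_Icc] at hp hq
      by_cases h1 : p ∈ G <;> by_cases h2 : q ∈ G <;>
        simp only [h1, h2, if_true, if_false] at heq <;> omega
  rw [Finset.card_erase_of_mem hFmem, Nat.card_Icc] at key
  have hcard : 1 ≤ G.card := Finset.card_pos.mpr hne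
  omega

lemma mult_not_mem {G : Finset ℕ} : mult G ∉ G := by
  have hne : {s : ℕ | 0 < s ∧ s ∉ G}.Nonempty := by
    refine ⟨frob G + 1, by omega, fun h => ?_⟩
    exact absurd (le_frob h) (by omega)
  exact (Nat.sInf_mem hne).2

lemma mult_pos {G : Finset ℕ} : 0 < mult G := by
  have hne : {s : ℕ | 0 < s ∧ s ∉ G}.Nonempty := by
    refine ⟨frob G + 1, by omega, fun h => ?_⟩
    exact absurd (le_frob h) (by omega)
  exact (Nat.sInf_mem hne).1

lemma lt_mult_mem {G : Finset ℕ} {k : ℕ} (h0 : 0 < k) (hk : k < mult G) : k ∈ G := by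
  by_contra h
  have hmem : k ∈ {s : ℕ | 0 < s ∧ s ∉ G} := ⟨h0, h⟩
  have := Nat.sInf_le hmem
  simp only [mult] at hk
  omega

/-- jump-left elements -/
def jumpL (κ : ℕ) (G : Finset ℕ) : Finset ℕ :=
  G.filter (fun ℓ => ℓ + κ ∈ G ∧ ∀ c ∈ G, c ≤ ℓ ∨ ℓ + κ ≤ c)

lemma mem_jumpL_iff {κ : ℕ} (hκ : 0 < κ) {G : Finset ℕ} {ℓ : ℕ} :
    ℓ ∈ jumpL κ G ↔ Consec G ℓ (ℓ + κ) := by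
  simp only [jumpL, Finset.mem_filter, Consec]
  constructor
  · rintro ⟨h1, h2, h3⟩; exact ⟨h1, h2, by omega, h3⟩
  · rintro ⟨h1, h2, _, h4⟩; exact ⟨h1, h2, h4⟩

lemma jumpL_nonempty {κ : ℕ} (hκ : 0 < κ) {G : Finset ℕ} (hP : PureSparse κ G) :
    (jumpL κ G).Nonempty := by
  obtain ⟨a, b, hc, hd⟩ := hP.2
  have hb : b = a + κ := by have := hc.2.2.1; omega
  exact ⟨a, (mem_jumpL_iff hκ).mpr (hb ▸ hc)⟩

/-- the last jump-left -/
def lastJ (κ : ℕ) (G : Finset ℕ) : ℕ := (jumpL κ G).sup id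

lemma lastJ_mem {κ : ℕ} {G : Finset ℕ} (h : (jumpL κ G).Nonempty) :
    lastJ κ G ∈ jumpL κ G := by
  obtain ⟨a, ha, hval⟩ := Finset.exists_mem_eq_sup _ h id
  rw [lastJ, hval]; exact ha

lemma le_lastJ {κ : ℕ} {G : Finset ℕ} {c : ℕ} (h : c ∈ jumpL κ G) : c ≤ lastJ κ G :=
  Finset.le_sup (f := id) h

end S19

namespace S19

/-- Bundled facts about a pure κ-sparse gapset with chosen last jump `a`. -/
structure Fx (κ : ℕ) (G : Finset ℕ) (a : ℕ) : Prop where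
  gap : IsGapset G
  hκ2 : 2 ≤ κ
  aG : a ∈ G
  bG : a + κ ∈ G
  gapint : ∀ c ∈ G, c ≤ a ∨ a + κ ≤ c
  last : ∀ c ∈ jumpL κ G, c ≤ a
  base : ∀ k, 0 < k → k < κ → k ∈ G
  Fle : ∀ ℓ ∈ G, ℓ + 1 ≤ 2 * G.card
  mge : κ ≤ mult G
  mlea : mult G ≤ a + 1
  dle : ∀ c d, Consec G c d → d - c ≤ κ

lemma mkFx {κ : ℕ} {G : Finset ℕ} (hκ : 2 ≤ κ) (hg : IsGapset G) (hp : PureSparse κ G) :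
    Fx κ G (lastJ κ G) := by
  have hne := jumpL_nonempty (by omega) hp
  have hmem := lastJ_mem hne
  simp only [jumpL, Finset.mem_filter] at hmem
  obtain ⟨haG, hbG, hint⟩ := hmem
  set a := lastJ κ G
  have base : ∀ k, 0 < k → k < κ → k ∈ G := by
    intro k hk0 hkκ
    have hor := hg.2 (a + κ) hbG (a + (κ - k)) k (by omega) hk0 (by omega)
    rcases hor with h | h
    · rcases hint _ h with h2 | h2 <;> omega
    · exact h
  have hGne : G.Nonempty := ⟨a, haG⟩
  have hFle : ∀ ℓ ∈ G, ℓ + 1 ≤ 2 * G.card := by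
    intro ℓ hl
    have := frob_le_two_card hg hGne
    have := le_frob hl
    omega
  have mge : κ ≤ mult G := by
    by_contra h
    exact mult_not_mem (base _ mult_pos (by omega))
  refine ⟨hg, hκ, haG, hbG, hint, fun c hc => le_lastJ hc, base, hFle, mge, ?_, hp.1⟩
  by_contra h
  have : a + 1 ∈ G := lt_mult_mem (by omega) (by omega)
  rcases hint _ this with h2 | h2 <;> omega

namespace Fx

variable {κ : ℕ} {G : Finset ℕ} {a : ℕ}

lemma not_mem_int (F : Fx κ G a) {c : ℕ} (h1 : a < c) (h2 : c < a + κ) : c ∉ G := by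
  intro hc
  rcases F.gapint c hc with h | h <;> omega

lemma mem_of_lt_mult (F : Fx κ G a) {k : ℕ} (h0 : 0 < k) (h : k < mult G) : k ∈ G :=
  lt_mult_mem h0 h

lemma mult_not_mem' (F : Fx κ G a) : mult G ∉ G := mult_not_mem

lemma one_mem (F : Fx κ G a) : 1 ∈ G := F.mem_of_lt_mult (by omega) (by have := F.mge; have := F.hκ2; omega)

end Fx

/-- the stretch map -/
def sig (a : ℕ) (G : Finset ℕ) : Finset ℕ :=
  insert 1 ((G.filter (· ≤ a)).image (· + 1) ∪ (G.filter (fun ℓ => a < ℓ)).image (· + 2))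

lemma mem_sig {a : ℕ} {G : Finset ℕ} {w : ℕ} :
    w ∈ sig a G ↔ w = 1 ∨ (∃ ℓ ∈ G, ℓ ≤ a ∧ w = ℓ + 1) ∨ (∃ ℓ ∈ G, a < ℓ ∧ w = ℓ + 2) := by
  simp only [sig, Finset.mem_insert, Finset.mem_union, Finset.mem_image, Finset.mem_filter]
  constructor
  · rintro (h | ⟨ℓ, ⟨h1, h2⟩, h3⟩ | ⟨ℓ, ⟨h1, h2⟩, h3⟩)
    · exact Or.inl h
    · exact Or.inr (Or.inl ⟨ℓ, h1, h2, h3.symm⟩)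
    · exact Or.inr (Or.inr ⟨ℓ, h1, h2, h3.symm⟩)
  · rintro (h | ⟨ℓ, h1, h2, h3⟩ | ⟨ℓ, h1, h2, h3⟩)
    · exact Or.inl h
    · exact Or.inr (Or.inl ⟨ℓ, ⟨h1, h2⟩, h3.symm⟩)
    · exact Or.inr (Or.inr ⟨ℓ, ⟨h1, h2⟩, h3.symm⟩)

lemma card_sig {κ a : ℕ} {G : Finset ℕ} (F : Fx κ G a) : (sig a G).card = G.card + 1 := by
  classical
  rw [sig]
  rw [Finset.card_insert_of_notMem, Finset.card_union_of_disjoint]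
  · rw [Finset.card_image_of_injective _ (add_left_injective 1),
      Finset.card_image_of_injective _ (add_left_injective 2)]
    have hsplit := Finset.card_filter_add_card_filter_not (s := G) (p := (· ≤ a))
    have hcng : Finset.filter (fun ℓ => a < ℓ) G = Finset.filter (fun ℓ => ¬ ℓ ≤ a) G := by
      apply Finset.filter_congr; intro x _; simp [Nat.not_le]
    rw [hcng]
    omega
  · rw [Finset.disjoint_left]
    rintro w hw hw2
    simp only [Finset.mem_image, Finset.mem_filter] at hw hw2
    obtain ⟨ℓ, ⟨_, h2⟩, h3⟩ := hw
    obtain ⟨k, ⟨_, h5⟩, h6⟩ := hw2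
    omega
  · simp only [Finset.mem_union, Finset.mem_image, Finset.mem_filter]
    rintro (⟨ℓ, ⟨hl, _⟩, h⟩ | ⟨ℓ, ⟨hl, _⟩, h⟩) <;>
      [skip; omega]
    have : ℓ ≠ 0 := fun h0 => F.gap.1 (h0 ▸ hl)
    omega

end S19

namespace S19

variable {κ : ℕ} {G : Finset ℕ} {a : ℕ}

lemma mono_shift (F : Fx κ G a) {l1 l2 : ℕ} (h2 : l2 ∈ G) (hlt : l1 < l2) :
    l1 + (if l1 ≤ a then 1 else 2) < l2 + (if l2 ≤ a then 1 else 2) := by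
  have hκ := F.hκ2
  rcases F.gapint l2 h2 with h | h <;> split_ifs <;> omega

lemma sig_mem_of_mem (F : Fx κ G a) {ℓ : ℕ} (h : ℓ ∈ G) :
    ℓ + (if ℓ ≤ a then 1 else 2) ∈ sig a G := by
  rw [mem_sig]
  split_ifs with hc
  · exact Or.inr (Or.inl ⟨ℓ, h, hc, rfl⟩)
  · exact Or.inr (Or.inr ⟨ℓ, h, by omega, rfl⟩)

lemma consec_sig (F : Fx κ G a) {u v : ℕ} (h : Consec (sig a G) u v) :
    (u = 1 ∧ v = 2) ∨ ∃ c d, Consec G c d ∧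
      u = c + (if c ≤ a then 1 else 2) ∧ v = d + (if d ≤ a then 1 else 2) := by
  obtain ⟨hu, hv, huv, hbet⟩ := h
  have hκ := F.hκ2
  have hma := F.mlea
  have hmκ := F.mge
  have h1a : (1:ℕ) ≤ a := by omega
  have h1G : (1:ℕ) ∈ G := F.one_mem
  have h2s : (2:ℕ) ∈ sig a G := by
    rw [mem_sig]; exact Or.inr (Or.inl ⟨1, h1G, h1a, rfl⟩)
  have hpos : ∀ ℓ ∈ G, 1 ≤ ℓ := by
    intro ℓ hl
    rcases Nat.eq_zero_or_pos ℓ with h0 | h0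
    · exact absurd (h0 ▸ hl) F.gap.1
    · omega
  rw [mem_sig] at hu hv
  rcases hu with hu1 | hu
  · -- u = 1, so v = 2
    subst hu1
    rcases hbet 2 h2s with h | h
    · omega
    · left; exact ⟨rfl, by omega⟩
  · -- u = c + ε
    have hc : ∃ c ∈ G, u = c + (if c ≤ a then 1 else 2) := by
      rcases hu with ⟨c, hcG, hca, rfl⟩ | ⟨c, hcG, hca, rfl⟩
      · exact ⟨c, hcG, by simp [hca]⟩
      · exact ⟨c, hcG, by simp [show ¬ c ≤ a by omega]⟩
    obtain ⟨c, hcG, hue⟩ := hc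
    have hd : ∃ d ∈ G, v = d + (if d ≤ a then 1 else 2) := by
      rcases hv with hv1 | ⟨d, hdG, hda, rfl⟩ | ⟨d, hdG, hda, rfl⟩
      · exfalso; have := hpos c hcG; split_ifs at hue <;> omega
      · exact ⟨d, hdG, by simp [hda]⟩
      · exact ⟨d, hdG, by simp [show ¬ d ≤ a by omega]⟩
    obtain ⟨d, hdG, hve⟩ := hd
    have hcd : c < d := by
      by_contra hge
      rcases Nat.lt_or_ge d c with hlt | hle
      · have := mono_shift F hcG hlt; omega
      · have : c = d := by omega
        subst this; omega
    right
    refine ⟨c, d, ⟨hcG, hdG, hcd, ?_⟩, hue, hve⟩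
    intro e heG
    by_contra hbad
    push_neg at hbad
    have he1 := mono_shift F heG hbad.1
    have he2 := mono_shift F hdG hbad.2
    have hes := sig_mem_of_mem F heG
    rcases hbet _ hes with h | h <;> omega

lemma sig_jump_consec (F : Fx κ G a) : Consec (sig a G) (a+1) (a + κ + 2) := by
  have hκ := F.hκ2
  refine ⟨?_, ?_, by omega, ?_⟩
  · rw [mem_sig]; exact Or.inr (Or.inl ⟨a, F.aG, le_refl a, rfl⟩)
  · rw [mem_sig]; exact Or.inr (Or.inr ⟨a + κ, F.bG, by omega, by omega⟩)
  · intro w hw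
    rw [mem_sig] at hw
    rcases hw with h | ⟨ℓ, hl, hla, rfl⟩ | ⟨ℓ, hl, hla, rfl⟩
    · omega
    · omega
    · rcases F.gapint ℓ hl with h | h <;> omega

lemma sig_pure (F : Fx κ G a) : PureSparse (κ+1) (sig a G) := by
  constructor
  · intro u v h
    rcases consec_sig F h with ⟨rfl, rfl⟩ | ⟨c, d, hcd, hue, hve⟩
    · omega
    · have := F.dle c d hcd
      have := hcd.2.2.1
      split_ifs at hue hve <;> omega
  · exact ⟨a + 1, a + κ + 2, sig_jump_consec F, by omega⟩

lemma sig_unique_jump (F : Fx κ G a) {u v : ℕ} (h : Consec (sig a G) u v)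
    (hd : v = u + (κ + 1)) : u = a + 1 := by
  have hκ := F.hκ2
  rcases consec_sig F h with ⟨rfl, rfl⟩ | ⟨c, d, hcd, hue, hve⟩
  · omega
  · have hle := F.dle c d hcd
    have hlt := hcd.2.2.1
    have hca : c ≤ a ∧ ¬ d ≤ a ∧ d = c + κ := by
      split_ifs at hue hve <;> omega
    obtain ⟨hca, hda, rfl⟩ := hca
    rw [if_pos hca] at hue
    have : c = a ∨ c < a := by omega
    rcases this with h | h
    · omega
    · exfalso
      rcases hcd.2.2.2 a F.aG with h2 | h2 <;> omega

lemma sig_inj_aux {G2 : Finset ℕ} (F : Fx κ G a) (F2 : Fx κ G2 a)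
    (h : sig a G ⊆ sig a G2) : G ⊆ G2 := by
  intro ℓ hl
  have hκ := F.hκ2
  have hpos : 1 ≤ ℓ := by
    rcases Nat.eq_zero_or_pos ℓ with h0 | h0
    · exact absurd (h0 ▸ hl) F.gap.1
    · omega
  have hmem := h (sig_mem_of_mem F hl)
  rw [mem_sig] at hmem
  split_ifs at hmem with hla
  · rcases hmem with h1 | ⟨k, hk, hka, he⟩ | ⟨k, hk, hka, he⟩
    · omega
    · have : k = ℓ := by omega
      exact this ▸ hk
    · omega
  · rcases hmem with h1 | ⟨k, hk, hka, he⟩ | ⟨k, hk, hka, he⟩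
    · omega
    · omega
    · have : k = ℓ := by omega
      exact this ▸ hk

end S19

namespace S19

lemma sig_gapset {n : ℕ} {G : Finset ℕ} {a : ℕ} (hn : 0 < n) (F : Fx (2*n) G a)
    (hcard : G.card = 3*n + 1) (hE : ¬(2*n ∉ G ∧ 4*n+1 ∈ G)) :
    IsGapset (sig a G) := by
  have hm2n := F.mge
  have hma := F.mlea
  have hmnot : mult G ∉ G := mult_not_mem
  have hFle : ∀ ℓ ∈ G, ℓ ≤ 6*n+1 := fun ℓ hl => by
    have := F.Fle ℓ hl; omega
  have haub : a ≤ 4*n+1 := by have := hFle _ F.bG; omega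
  have hsubm : ∀ k, 0 < k → k ≤ mult G → k ∈ sig a G := by
    intro k hk0 hkm
    rcases Nat.eq_or_lt_of_le hk0 with h1 | h1
    · exact mem_sig.mpr (Or.inl h1.symm)
    · exact mem_sig.mpr (Or.inr (Or.inl ⟨k - 1, F.mem_of_lt_mult (by omega) (by omega),
        by omega, by omega⟩))
  have hgap := F.gap.2
  have ha1 : a + 1 ∉ G := F.not_mem_int (by omega) (by omega)
  have hG1357 : n = 1 → mult G = 2 → G = ({1,3,5,7} : Finset ℕ) := by
    intro hn1 hm
    subst hn1
    have h2 : (2:ℕ) ∉ G := hm ▸ hmnot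
    have h4 : (4:ℕ) ∉ G := by
      intro h
      rcases hgap 4 h 2 2 (by omega) (by omega) (by omega) with h' | h' <;> exact h2 h'
    have h6 : (6:ℕ) ∉ G := by
      intro h
      rcases hgap 6 h 2 4 (by omega) (by omega) (by omega) with h' | h' <;> [exact h2 h'; exact h4 h']
    have hsub : G ⊆ ({1,3,5,7} : Finset ℕ) := by
      intro w hw
      have hw7 := hFle w hw
      have hw0 : w ≠ 0 := fun h => F.gap.1 (h ▸ hw)
      simp only [Finset.mem_insert, Finset.mem_singleton]
      by_contra hc
      push_neg at hc
      interval_cases w <;> simp_all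
    exact (Finset.eq_of_subset_of_card_le hsub (by rw [hcard]; decide)).symm ▸ rfl
  constructor
  · intro h
    rcases mem_sig.mp h with h | ⟨ℓ, _, _, h⟩ | ⟨ℓ, _, _, h⟩ <;> omega
  intro z' hz' x0 y0 hx0 hy0 hsum0
  by_contra hcon
  push_neg at hcon
  obtain ⟨hxn0, hyn0⟩ := hcon
  -- wlog x ≤ y
  have claim : ∀ x y, 0 < x → 0 < y → x ≤ y → z' = x + y →
      x ∉ sig a G → y ∉ sig a G → False := by
    intro x y hx hy hxy hsum hxn hyn
    have key1 : ∀ w, w ∉ sig a G → w ≤ a + 1 → 0 < w → (w - 1) ∉ G := by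
      intro w hw hwa hw0 hmem
      have hw1 : 1 ≤ w - 1 := by
        rcases Nat.eq_zero_or_pos (w-1) with h0 | h0
        · exact absurd (h0 ▸ hmem) F.gap.1
        · omega
      exact hw (mem_sig.mpr (Or.inr (Or.inl ⟨w - 1, hmem, by omega, by omega⟩)))
    have key2 : ∀ w, w ∉ sig a G → a + 3 ≤ w → (w - 2) ∉ G := by
      intro w hw hwa hmem
      exact hw (mem_sig.mpr (Or.inr (Or.inr ⟨w - 2, hmem, by omega, by omega⟩)))
    have hxm : mult G + 1 ≤ x := by
      by_contra h
      exact hxn (hsubm x hx (by omega))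
    have hym : mult G + 1 ≤ y := by
      by_contra h
      exact hyn (hsubm y hy (by omega))
    rcases mem_sig.mp hz' with h1 | ⟨z, hzG, hza, hze⟩ | ⟨z, hzG, hza, hze⟩
    · omega
    · -- CASE A : z ≤ a
      have hzlb : 2 * mult G + 1 ≤ z := by omega
      have hmeq : mult G = 2*n := by omega
      have hzeq : z = 4*n+1 := by omega
      exact hE ⟨hmeq ▸ hmnot, hzeq ▸ hzG⟩
    · -- CASE B : z > a
      have hzb : a + 2*n ≤ z := by
        rcases F.gapint z hzG with h | h <;> omega
      rcases Nat.lt_or_ge (a+1) y with hy2 | hy1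
      · -- y ≥ a + 2
        rcases Nat.lt_or_ge (a+2) y with hy3 | hy2'
        · -- y ≥ a + 3
          have hym2 : (y - 2) ∉ G := key2 y hyn (by omega)
          rcases Nat.lt_or_ge (a+1) x with hx2 | hx1
          · -- x ≥ a + 2
            rcases Nat.lt_or_ge (a+2) x with hx3 | hx2'
            · -- x ≥ a + 3 : both big
              have hxm2 : (x - 2) ∉ G := key2 x hxn (by omega)
              have hyG : y ∈ G := by
                rcases hgap z hzG (x-2) y (by omega) (by omega) (by omega) with h | h
                · exact absurd h hxm2
                · exact h
              have hxG : x ∈ G := by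
                rcases hgap z hzG x (y-2) (by omega) (by omega) (by omega) with h | h
                · exact h
                · exact absurd h hym2
              have hxb : a + 2*n ≤ x := by
                rcases F.gapint x hxG with h | h <;> omega
              have hyb : a + 2*n ≤ y := by
                rcases F.gapint y hyG with h | h <;> omega
              have hzF := hFle z hzG
              have h2a : 2*a ≤ 2*n + 3 := by omega
              have hage : 2*n - 1 ≤ a := by omega
              have hnle : n ≤ 2 := by omega
              interval_cases n
              · -- n = 1
                rcases Nat.lt_or_ge a 2 with ha2 | ha2
                · -- a = 1, mult = 2
                  have hae : a = 1 := by omega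
                  have hme : mult G = 2 := by omega
                  have hxe : x = 4 := by omega
                  have h2G : (2:ℕ) ∉ G := hme ▸ hmnot
                  rcases hgap 4 (hxe ▸ hxG) 2 2 (by omega) (by omega) (by omega) with h | h <;>
                    exact h2G h
                · -- a = 2: mult = 3, x ≥ 5 impossible
                  have hae : a = 2 := by omega
                  omega
              · -- n = 2 : a = 3, mult = 4
                have hae : a = 3 := by omega
                have hme : mult G = 4 := by omega
                have h4G : (4:ℕ) ∉ G := hme ▸ hmnot
                have h5G : (5:ℕ) ∉ G := F.not_mem_int (by omega) (by omega)
                have h6G : (6:ℕ) ∉ G := F.not_mem_int (by omega) (by omega)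
                have hxe : x = 7 := by omega
                have hze2 : z = 12 ∨ z = 13 := by omega
                rcases hze2 with hze2 | hze2
                · rcases hgap 12 (hze2 ▸ hzG) 6 6 (by omega) (by omega) (by omega) with h | h <;>
                    exact h6G h
                · have h9G : (9:ℕ) ∈ G := by
                    rcases hgap 13 (hze2 ▸ hzG) 4 9 (by omega) (by omega) (by omega) with h | h
                    · exact absurd h h4G
                    · exact h
                  rcases hgap 9 h9G 4 5 (by omega) (by omega) (by omega) with h | h
                  · exact h4G h
                  · exact h5G h
            · -- x = a + 2
              have hxe : x = a + 2 := by omega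
              rcases Nat.lt_or_ge 1 n with hn2 | hn1
              · -- n ≥ 2 : a+2 not in G
                have ha2 : a + 2 ∉ G := F.not_mem_int (by omega) (by omega)
                rcases hgap z hzG (a+2) (y-2) (by omega) (by omega) (by omega) with h | h
                · exact ha2 h
                · exact hym2 h
              · -- n = 1
                have hn1' : n = 1 := by omega
                have hym1 : (y - 1) ∈ G := by
                  rcases hgap z hzG (a+1) (y-1) (by omega) (by omega) (by omega) with h | h
                  · exact absurd h ha1
                  · exact h
                have hzF := hFle z hzG
                rcases Nat.lt_or_ge (a+3) y with hy4 | hy3'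
                · -- y ≥ a + 4
                  have hy1b : a + 2*n ≤ y - 1 := by
                    rcases F.gapint (y-1) hym1 with h | h <;> omega
                  have hae : a = 1 := by omega
                  have hme : mult G = 2 := by omega
                  have hyV : y = 5 ∨ y = 6 := by omega
                  rcases hyV with hyV | hyV
                  · -- y = 5 : y - 2 = 3 = b ∈ G contradiction
                    have : (3:ℕ) ∈ G := by
                      have := F.bG; rw [hn1', hae] at this; exact this
                    exact hym2 (by rw [hyV]; exact this)
                  · -- y = 6: G = {1,3,5,7}
                    have hG' := hG1357 hn1' hme
                    have h5G : (5:ℕ) ∈ G := by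
                      have := hym1; rw [hyV] at this; exact this
                    exact hE ⟨by rw [hG', hn1']; decide, by rw [hG', hn1']; decide⟩
                · -- y = a + 3
                  have hye : y = a + 3 := by omega
                  have hze2 : z = 2*a + 3 := by omega
                  have haV : a ≤ 2 := by omega
                  rcases Nat.lt_or_ge a 2 with ha2 | ha2
                  · -- a = 1
                    have hae : a = 1 := by omega
                    have hme : mult G = 2 := by omega
                    have hG' := hG1357 hn1' hme
                    exact hE ⟨by rw [hG', hn1']; decide, by rw [hG', hn1']; decide⟩
                  · -- a = 2 : G = {1,2,4,7}, diff 3 > 2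
                    have hae : a = 2 := by omega
                    have h2G : (2:ℕ) ∈ G := hae ▸ F.aG
                    have hme : mult G = 3 := by
                      have : 3 ≤ mult G := by
                        by_contra h
                        have : mult G = 2 := by omega
                        exact (this ▸ hmnot) h2G
                      omega
                    have h4G : (4:ℕ) ∈ G := by
                      have := F.bG; rw [hn1', hae] at this; exact this
                    have h7G : (7:ℕ) ∈ G := by
                      have : z = 7 := by omega
                      exact this ▸ hzG
                    have h1G : (1:ℕ) ∈ G := F.one_mem
                    have hsub : ({1,2,4,7} : Finset ℕ) ⊆ G := by
                      intro w hw
                      simp only [Finset.mem_insert, Finset.mem_singleton] at hw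
                      rcases hw with rfl | rfl | rfl | rfl <;> assumption
                    have hGe : ({1,2,4,7} : Finset ℕ) = G :=
                      Finset.eq_of_subset_of_card_le hsub (by rw [hcard, hn1']; decide)
                    have hcons : Consec G 4 7 := by
                      refine ⟨h4G, h7G, by omega, ?_⟩
                      intro c hc
                      rw [← hGe] at hc
                      simp only [Finset.mem_insert, Finset.mem_singleton] at hc
                      rcases hc with rfl | rfl | rfl | rfl <;> omega
                    have := F.dle 4 7 hcons
                    rw [hn1'] at this
                    omega
          · -- x ≤ a + 1
            have hxm1 : (x - 1) ∉ G := key1 x hxn (by omega) hx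
            rcases Nat.lt_or_ge (a+2) y with hy3 | hy2'
            · -- y ≥ a + 3
              have hym2 : (y - 2) ∉ G := key2 y hyn (by omega)
              have hym1 : (y - 1) ∈ G := by
                rcases hgap z hzG (x-1) (y-1) (by omega) (by omega) (by omega) with h | h
                · exact absurd h hxm1
                · exact h
              have hxG : x ∈ G := by
                rcases hgap z hzG x (y-2) (by omega) (by omega) (by omega) with h | h
                · exact h
                · exact absurd h hym2
              have hxa : x ≤ a := by
                rcases Nat.eq_or_lt_of_le hx1 with h | h
                · exact absurd (h ▸ hxG) ha1
                · omega
              have hy1b : a + 2*n ≤ y - 1 := by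
                rcases F.gapint (y-1) hym1 with h | h <;> omega
              have hzF := hFle z hzG
              have hmle : mult G + a ≤ 4*n + 1 := by omega
              have haG : mult G + 1 ≤ a := by omega
              have hmeq : mult G = 2*n := by omega
              have haeq : a = 2*n + 1 := by omega
              have hbeq : a + 2*n = 4*n + 1 := by omega
              exact hE ⟨hmeq ▸ hmnot, hbeq ▸ F.bG⟩
            · -- y = a + 2
              have hye : y = a + 2 := by omega
              rcases hgap z hzG (x-1) (a+1) (by omega) (by omega) (by omega) with h | h
              · exact hxm1 h
              · exact ha1 h
        · -- y = a + 2 (outer)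
          have hye : y = a + 2 := by omega
          rcases Nat.lt_or_ge (a+1) x with hx2 | hx1
          · -- x = a + 2 since x ≤ y
            rcases hgap z hzG (a+1) (a+1) (by omega) (by omega) (by omega) with h | h <;>
              exact ha1 h
          · have hxm1 : (x - 1) ∉ G := key1 x hxn (by omega) hx
            rcases hgap z hzG (x-1) (a+1) (by omega) (by omega) (by omega) with h | h
            · exact hxm1 h
            · exact ha1 h
      · -- y ≤ a + 1 : both small
        have hxm1 : (x - 1) ∉ G := key1 x hxn (by omega) hx
        have hym1 : (y - 1) ∉ G := key1 y hyn (by omega) hy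
        rcases hgap z hzG (x-1) (y-1) (by omega) (by omega) (by omega) with h | h
        · exact hxm1 h
        · exact hym1 h
  rcases Nat.le_total x0 y0 with h | h
  · exact claim x0 y0 hx0 hy0 h hsum0 hxn0 hyn0
  · exact claim y0 x0 hy0 hx0 h (by omega) hyn0 hxn0

end S19

namespace S19

lemma sig_notE {n : ℕ} {G : Finset ℕ} {a : ℕ} (hn : 0 < n) (F : Fx (2*n) G a)
    (hcard : G.card = 3*n + 1) :
    ¬(2*n+1 ∉ sig a G ∧ 4*n+1 ∈ sig a G) := by
  rintro ⟨h1, h2⟩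
  have hm2n := F.mge
  have hma := F.mlea
  have hmnot : mult G ∉ G := mult_not_mem
  have hgap := F.gap.2
  have hFle : ∀ ℓ ∈ G, ℓ ≤ 6*n+1 := fun ℓ hl => by
    have := F.Fle ℓ hl; omega
  have hsubm : ∀ k, 0 < k → k ≤ mult G → k ∈ sig a G := by
    intro k hk0 hkm
    rcases Nat.eq_or_lt_of_le hk0 with h1 | h1
    · exact mem_sig.mpr (Or.inl h1.symm)
    · exact mem_sig.mpr (Or.inr (Or.inl ⟨k - 1, F.mem_of_lt_mult (by omega) (by omega),
        by omega, by omega⟩))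
  have hme : mult G = 2*n := by
    by_contra h
    exact h1 (hsubm (2*n+1) (by omega) (by omega))
  have h2nG : 2*n ∉ G := hme ▸ hmnot
  -- 4n+1 ∈ sig
  rcases mem_sig.mp h2 with h | ⟨ℓ, hl, hla, hle⟩ | ⟨ℓ, hl, hla, hle⟩
  · omega
  · -- ℓ = 4n ∈ G
    have h4n : 4*n ∈ G := by
      have he : ℓ = 4*n := by omega
      exact he ▸ hl
    rcases hgap (4*n) h4n (2*n) (2*n) (by omega) (by omega) (by omega) with h | h <;>
      exact h2nG h
  · -- ℓ = 4n - 1 ∈ G, a < ℓ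
    have hl4 : ℓ + 1 = 4*n := by omega
    have hlb : a + 2*n ≤ ℓ := by
      rcases F.gapint ℓ hl with h | h <;> omega
    have hae : a = 2*n - 1 := by omega
    -- dead zone
    have hdead : ∀ w ∈ G, w ≤ 2*n - 1 ∨ 4*n - 1 ≤ w := by
      intro w hw
      rcases F.gapint w hw with h | h <;> omega
    -- the tail K
    set Fr := frob G with hFr
    have hFm : Fr ∈ G := frob_mem ⟨a, F.aG⟩
    have hFub := hFle _ hFm
    have hjoin : ∀ w ∈ G, w ≤ Fr := fun w hw => le_frob hw
    -- K = G.filter (4n-1 ≤ ·), card n+2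
    have hKcard : (G.filter (fun w => 4*n - 1 ≤ w)).card = n + 2 := by
      have hsplit := Finset.card_filter_add_card_filter_not (s := G)
        (p := fun w => 4*n - 1 ≤ w)
      have hlow : G.filter (fun w => ¬ 4*n - 1 ≤ w) = Finset.Icc 1 (2*n-1) := by
        ext w
        simp only [Finset.mem_filter, Finset.mem_Icc]
        constructor
        · rintro ⟨hw, hw2⟩
          have := hdead w hw
          have hw0 : w ≠ 0 := fun h => F.gap.1 (h ▸ hw)
          omega
        · rintro ⟨hw1, hw2⟩
          exact ⟨F.base w (by omega) (by omega), by omega⟩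
      rw [hlow, Nat.card_Icc] at hsplit
      omega
    have hKsub : (G.filter (fun w => 4*n - 1 ≤ w)) ⊆ Finset.Icc (4*n-1) Fr := by
      intro w hw
      simp only [Finset.mem_filter] at hw
      exact Finset.mem_Icc.mpr ⟨hw.2, hjoin w hw.1⟩
    have hFlb : 5*n ≤ Fr := by
      have := Finset.card_le_card hKsub
      rw [hKcard, Nat.card_Icc] at this
      omega
    rcases Nat.lt_or_ge 2 n with h3 | h3
    · -- n ≥ 3 : single witness
      set x := max (2*n) (Fr - (4*n-2)) with hx
      have hx1 : 2*n ≤ x ∧ x ≤ 4*n - 2 := by omega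
      have hx2 : 2*n ≤ Fr - x ∧ Fr - x ≤ 4*n - 2 := by omega
      rcases hgap Fr hFm x (Fr - x) (by omega) (by omega) (by omega) with h | h
      · rcases hdead x h with h' | h' <;> omega
      · rcases hdead (Fr - x) h with h' | h' <;> omega
    · -- n ≤ 2
      interval_cases n
      · -- n = 1 : a = 1, mult = 2, show G = {1,3,5,7} and contradict last jump
        have h2G : (2:ℕ) ∉ G := by
          intro h
          apply hmnot
          rw [hme]
          simpa using h
        have h4 : (4:ℕ) ∉ G := by
          intro h
          rcases hgap 4 h 2 2 (by omega) (by omega) (by omega) with h' | h' <;> exact h2G h'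
        have h6 : (6:ℕ) ∉ G := by
          intro h
          rcases hgap 6 h 2 4 (by omega) (by omega) (by omega) with h' | h' <;>
            [exact h2G h'; exact h4 h']
        have hsub : G ⊆ ({1,3,5,7} : Finset ℕ) := by
          intro w hw
          have hw7 := hFle w hw
          have hw0 : w ≠ 0 := fun h => F.gap.1 (h ▸ hw)
          simp only [Finset.mem_insert, Finset.mem_singleton]
          by_contra hc
          push_neg at hc
          interval_cases w <;> simp_all
        have hGe : G = ({1,3,5,7} : Finset ℕ) :=
          Finset.eq_of_subset_of_card_le hsub (by rw [hcard]; decide)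
        have hcons : Consec G 3 5 := by
          refine ⟨by rw [hGe]; decide, by rw [hGe]; decide, by omega, ?_⟩
          intro c hc
          rw [hGe] at hc
          simp only [Finset.mem_insert, Finset.mem_singleton] at hc
          rcases hc with rfl | rfl | rfl | rfl <;> omega
        have h3j : 3 ∈ jumpL 2 G := by
          rw [mem_jumpL_iff (by omega)]
          exact hcons
        have := F.last 3 h3j
        omega
      · -- n = 2 : a = 3, mult = 4, dead zone [4,6], F ∈ [10,13]
        have hFub2 : Fr ≤ 13 := hFub
        rcases Nat.lt_or_ge Fr 13 with hF13 | hF13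
        · -- F ≤ 12 : witness
          set x := max 4 (Fr - 6) with hx
          have hx1 : 4 ≤ x ∧ x ≤ 6 := by omega
          have hx2 : 4 ≤ Fr - x ∧ Fr - x ≤ 6 := by omega
          rcases hgap Fr hFm x (Fr - x) (by omega) (by omega) (by omega) with h | h
          · rcases hdead x h with h' | h' <;> omega
          · rcases hdead (Fr - x) h with h' | h' <;> omega
        · -- F = 13
          have hFe : Fr = 13 := by omega
          have h9 : (9:ℕ) ∈ G := by
            rcases hgap Fr hFm 4 9 (by omega) (by omega) (by omega) with h | h
            · rcases hdead 4 h with h' | h' <;> omega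
            · exact h
          have h8 : (8:ℕ) ∈ G := by
            rcases hgap Fr hFm 5 8 (by omega) (by omega) (by omega) with h | h
            · rcases hdead 5 h with h' | h' <;> omega
            · exact h
          have h7 : (7:ℕ) ∈ G := by
            rcases hgap Fr hFm 6 7 (by omega) (by omega) (by omega) with h | h
            · rcases hdead 6 h with h' | h' <;> omega
            · exact h
          have hsub : ({1,2,3,7,8,9,13} : Finset ℕ) ⊆ G := by
            intro w hw
            simp only [Finset.mem_insert, Finset.mem_singleton] at hw
            rcases hw with rfl | rfl | rfl | rfl | rfl | rfl | rfl
            · exact F.base 1 (by omega) (by omega)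
            · exact F.base 2 (by omega) (by omega)
            · exact F.base 3 (by omega) (by omega)
            · exact h7
            · exact h8
            · exact h9
            · exact hFe ▸ hFm
          have hGe : ({1,2,3,7,8,9,13} : Finset ℕ) = G :=
            Finset.eq_of_subset_of_card_le hsub (by rw [hcard]; decide)
          have hcons : Consec G 9 13 := by
            refine ⟨h9, hFe ▸ hFm, by omega, ?_⟩
            intro c hc
            rw [← hGe] at hc
            simp only [Finset.mem_insert, Finset.mem_singleton] at hc
            rcases hc with rfl | rfl | rfl | rfl | rfl | rfl | rfl <;> omega
          have h9j : 9 ∈ jumpL 4 G := by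
            rw [mem_jumpL_iff (by omega)]
            exact hcons
          have := F.last 9 h9j
          omega

end S19

namespace S19

lemma jumpB_unique {n : ℕ} {G : Finset ℕ} {a : ℕ} (hn : 0 < n) (F : Fx (2*n+1) G a)
    (hcard : G.card = 3*n + 2) {c1 c2 : ℕ}
    (h1 : Consec G c1 (c1 + (2*n+1))) (h2 : Consec G c2 (c2 + (2*n+1))) : c1 = c2 := by
  have hgap := F.gap.2
  have hFle : ∀ ℓ ∈ G, ℓ ≤ 6*n+3 := fun ℓ hl => by
    have := F.Fle ℓ hl; omega
  have claim : ∀ c1 c2, c1 < c2 → Consec G c1 (c1 + (2*n+1)) → Consec G c2 (c2 + (2*n+1)) →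
      False := by
    intro c1 c2 hlt h1 h2
    have hmc1 : mult G ≤ c1 + 1 := by
      by_contra h
      have hmem : c1 + 1 ∈ G := lt_mult_mem (by omega) (by omega)
      rcases h1.2.2.2 _ hmem with h' | h' <;> omega
    have hb1c2 : c1 + (2*n+1) ≤ c2 := by
      rcases h1.2.2.2 c2 h2.1 with h' | h' <;> omega
    have hd : c2 + (2*n+1) ∈ G := h2.2.1
    have hdub := hFle _ hd
    have hc1ub : c1 ≤ 2*n + 1 := by omega
    have hc1lb : 2*n ≤ c1 := by have := F.mge; omega
    have hI : ∀ j, 1 ≤ j → j ≤ 2*n → (c2 + (2*n+1)) - c1 - j ∈ G := by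
      intro j hj1 hj2
      have hnx : c1 + j ∉ G := by
        intro hmem
        rcases h1.2.2.2 _ hmem with h' | h' <;> omega
      rcases hgap _ hd (c1 + j) ((c2 + (2*n+1)) - c1 - j) (by omega) (by omega) (by omega)
        with h' | h'
      · exact absurd h' hnx
      · exact h'
    rcases Nat.eq_or_lt_of_le hc1ub with he | he
    · -- c1 = 2n+1
      have hmul : mult G = 2*n+2 := by
        have hne : mult G ≠ 2*n+1 := by
          intro h
          exact mult_not_mem (h ▸ (he ▸ h1.1))
        have := F.mge; omega
      have hde : c2 + (2*n+1) = 6*n+3 := by omega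
      have := hI (2*n) (by omega) (le_refl _)
      rw [hde] at this
      have hval : 6*n+3 - c1 - 2*n = 2*n+2 := by omega
      rw [hval] at this
      exact mult_not_mem (hmul ▸ this)
    · -- c1 = 2n
      have hc1e : c1 = 2*n := by omega
      have hde : c2 + (2*n+1) = 6*n+2 ∨ c2 + (2*n+1) = 6*n+3 := by omega
      rcases hde with hde | hde
      · have := hI (2*n) (by omega) (le_refl _)
        rw [hde] at this
        have hval : 6*n+2 - c1 - 2*n = 2*n+2 := by omega
        rw [hval] at this
        rcases h1.2.2.2 _ this with h' | h' <;> omega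
      · rcases Nat.lt_or_ge 1 n with hn2 | hn1
        · have := hI (2*n) (by omega) (le_refl _)
          rw [hde] at this
          have hval : 6*n+3 - c1 - 2*n = 2*n+3 := by omega
          rw [hval] at this
          rcases h1.2.2.2 _ this with h' | h' <;> omega
        · -- n = 1 : G = {1,2,5,6,9}
          have hn1' : n = 1 := by omega
          subst hn1'
          have h6 : (6:ℕ) ∈ G := by
            have := hI 1 (by omega) (by omega)
            rw [hde] at this
            have hval : 9 - c1 - 1 = 6 := by omega
            rwa [hval] at this
          have h5 : (5:ℕ) ∈ G := by
            have := h1.2.1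
            rwa [show c1 + (2*1+1) = 5 by omega] at this
          have h9 : (9:ℕ) ∈ G := by rwa [hde] at hd
          have hsub : ({1,2,5,6,9} : Finset ℕ) ⊆ G := by
            intro w hw
            simp only [Finset.mem_insert, Finset.mem_singleton] at hw
            rcases hw with rfl | rfl | rfl | rfl | rfl
            · exact F.base 1 (by omega) (by omega)
            · exact F.base 2 (by omega) (by omega)
            · exact h5
            · exact h6
            · exact h9
          have hGe : ({1,2,5,6,9} : Finset ℕ) = G :=
            Finset.eq_of_subset_of_card_le hsub (by rw [hcard]; decide)
          have h3 : (3:ℕ) ∈ G := by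
            rcases hgap 6 h6 3 3 (by omega) (by omega) (by omega) with h' | h' <;> exact h'
          rw [← hGe] at h3
          simp at h3
  rcases Nat.lt_trichotomy c1 c2 with h | h | h
  · exact absurd (claim c1 c2 h h1 h2) not_false
  · exact h
  · exact absurd (claim c2 c1 h h2 h1) not_false

lemma no_late_2n {n : ℕ} {G : Finset ℕ} {a : ℕ} (hn : 0 < n) (F : Fx (2*n+1) G a)
    (hcard : G.card = 3*n+2) {c : ℕ} (hc : Consec G c (c + 2*n))
    (hca : a + (2*n+1) ≤ c) : False := by
  have hgap := F.gap.2
  have hn0 : 0 < 2*n := by omega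
  have hFle : ∀ ℓ ∈ G, ℓ ≤ 6*n+3 := fun ℓ hl => by
    have := F.Fle ℓ hl; omega
  have hd : c + 2*n ∈ G := hc.2.1
  have hdub := hFle _ hd
  have haub : a ≤ 2*n+2 := by omega
  have halb : 2*n ≤ a := by have := F.mge; have := F.mlea; omega
  have hI : ∀ j, 1 ≤ j → j ≤ 2*n → (c + 2*n) - a - j ∈ G := by
    intro j hj1 hj2
    have hnx : a + j ∉ G := F.not_mem_int (by omega) (by omega)
    rcases hgap _ hd (a + j) ((c + 2*n) - a - j) (by omega) (by omega) (by omega)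
      with h' | h'
    · exact absurd h' hnx
    · exact h'
  have hmlea := F.mlea
  have hmge := F.mge
  have hmnot : mult G ∉ G := mult_not_mem
  have hcases : a = 2*n ∨ a = 2*n+1 ∨ a = 2*n+2 := by omega
  rcases hcases with hae | hae | hae
  · -- a = 2n, mult = 2n+1
    have hmul : mult G = 2*n+1 := by omega
    have hdcase : c + 2*n = 6*n+1 ∨ c + 2*n = 6*n+2 ∨ c + 2*n = 6*n+3 := by omega
    rcases hdcase with hde | hde | hde
    · have := hI (2*n) (by omega) (le_refl _)
      rw [hde, show 6*n+1 - a - 2*n = 2*n+1 by omega] at this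
      exact hmnot (hmul ▸ this)
    · have := hI (2*n) (by omega) (le_refl _)
      rw [hde, show 6*n+2 - a - 2*n = 2*n+2 by omega] at this
      exact F.not_mem_int (by omega) (by omega) this
    · rcases Nat.lt_or_ge 1 n with hn2 | hn1
      · have := hI (2*n) (by omega) (le_refl _)
        rw [hde, show 6*n+3 - a - 2*n = 2*n+3 by omega] at this
        exact F.not_mem_int (by omega) (by omega) this
      · -- n = 1 : a=2, b=5, c=7, d=9 : card contradiction
        have hn1' : n = 1 := by omega
        subst hn1'
        have h6 : (6:ℕ) ∈ G := by
          have := hI 1 (by omega) (by omega)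
          rwa [hde, show 9 - a - 1 = 6 by omega] at this
        have h5 : (5:ℕ) ∈ G := by
          have := F.bG
          rwa [show a + (2*1+1) = 5 by omega] at this
        have h7 : (7:ℕ) ∈ G := by
          have := hc.1
          rwa [show c = 7 by omega] at this
        have h9 : (9:ℕ) ∈ G := by rwa [hde] at hd
        have hsub : ({1,2,5,6,7,9} : Finset ℕ) ⊆ G := by
          intro w hw
          simp only [Finset.mem_insert, Finset.mem_singleton] at hw
          rcases hw with rfl | rfl | rfl | rfl | rfl | rfl
          · exact F.base 1 (by omega) (by omega)
          · exact F.base 2 (by omega) (by omega)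
          · exact h5
          · exact h6
          · exact h7
          · exact h9
        have := Finset.card_le_card hsub
        rw [hcard] at this
        simp at this
  · -- a = 2n+1, mult = 2n+2
    have hmul : mult G = 2*n+2 := by
      have hne : mult G ≠ 2*n+1 := by
        intro h
        exact hmnot (h ▸ (hae ▸ F.aG))
      omega
    have hj : (1:ℕ) ≤ (c + 2*n) - a - (2*n+2) + 0 + 1 := by omega
    have hjval : ∃ j, 1 ≤ j ∧ j ≤ 2*n ∧ (c + 2*n) - a - j = 2*n+2 := by
      refine ⟨(c + 2*n) - a - (2*n+2), by omega, by omega, by omega⟩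
    obtain ⟨j, hj1, hj2, hjv⟩ := hjval
    have := hI j hj1 hj2
    rw [hjv] at this
    exact hmnot (hmul ▸ this)
  · -- a = 2n+2
    have hde : c + 2*n = 6*n+3 := by omega
    by_cases h21 : (2*n+1) ∈ G
    · -- mult = 2n+3
      have hmul : mult G = 2*n+3 := by
        have h1 : mult G ≠ 2*n+1 := fun h => hmnot (h ▸ h21)
        have h2 : mult G ≠ 2*n+2 := fun h => hmnot (h ▸ (hae ▸ F.aG))
        omega
      rcases Nat.lt_or_ge 1 n with hn2 | hn1
      · have := hI (2*n - 2) (by omega) (by omega)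
        rw [hde, show 6*n+3 - a - (2*n-2) = 2*n+3 by omega] at this
        exact hmnot (hmul ▸ this)
      · -- n = 1 : a = 4, mult = 5, b = 7 = c, d = 9
        have hn1' : n = 1 := by omega
        subst hn1'
        have h7 : (7:ℕ) ∈ G := by
          have := hc.1
          rwa [show c = 7 by omega] at this
        have h9 : (9:ℕ) ∈ G := by rwa [hde] at hd
        have hsub : ({1,2,3,4,7,9} : Finset ℕ) ⊆ G := by
          intro w hw
          simp only [Finset.mem_insert, Finset.mem_singleton] at hw
          rcases hw with rfl | rfl | rfl | rfl | rfl | rfl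
          · exact F.base 1 (by omega) (by omega)
          · exact F.base 2 (by omega) (by omega)
          · exact lt_mult_mem (by omega) (by omega)
          · have := F.aG; rwa [show a = 4 by omega] at this
          · exact h7
          · exact h9
        have := Finset.card_le_card hsub
        rw [hcard] at this
        simp at this
    · -- mult = 2n+1
      have hmul : mult G = 2*n+1 := by
        by_contra h
        exact h21 (lt_mult_mem (by omega) (by omega))
      have := hI (2*n) (by omega) (le_refl _)
      rw [hde, show 6*n+3 - a - 2*n = 2*n+1 by omega] at this
      exact hmnot (hmul ▸ this)

end S19

namespace S19

/-- the shrink map -/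
def psi (a : ℕ) (G : Finset ℕ) : Finset ℕ :=
  (G.filter (fun ℓ => 2 ≤ ℓ ∧ ℓ ≤ a)).image (· - 1) ∪ (G.filter (fun ℓ => a < ℓ)).image (· - 2)

lemma mem_psi {a : ℕ} (ha : 1 ≤ a) {G : Finset ℕ} {v : ℕ} :
    v ∈ psi a G ↔ (1 ≤ v ∧ v + 1 ∈ G ∧ v + 1 ≤ a) ∨ (v + 2 ∈ G ∧ a < v + 2) := by
  simp only [psi, Finset.mem_union, Finset.mem_image, Finset.mem_filter]
  constructor
  · rintro (⟨ℓ, ⟨h1, h2, h3⟩, h4⟩ | ⟨ℓ, ⟨h1, h2⟩, h3⟩)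
    · left
      have : ℓ = v + 1 := by omega
      exact ⟨by omega, this ▸ h1, by omega⟩
    · right
      have hl2 : 2 ≤ ℓ := by omega
      have : ℓ = v + 2 := by omega
      exact ⟨this ▸ h1, by omega⟩
  · rintro (⟨h1, h2, h3⟩ | ⟨h1, h2⟩)
    · exact Or.inl ⟨v + 1, ⟨h2, by omega, h3⟩, by omega⟩
    · exact Or.inr ⟨v + 2, ⟨h1, by omega⟩, by omega⟩

variable {κ : ℕ} {G : Finset ℕ} {a : ℕ}

lemma Fx.a_ge (F : Fx κ G a) : κ - 1 ≤ a := by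
  have := F.mge; have := F.mlea; omega

lemma card_psi (F : Fx κ G a) : (psi a G).card + 1 = G.card := by
  classical
  have hκ := F.hκ2
  have ha := F.a_ge
  rw [psi, Finset.card_union_of_disjoint]
  · rw [Finset.card_image_of_injOn, Finset.card_image_of_injOn]
    · have hsplit := Finset.card_filter_add_card_filter_not (s := G)
        (p := fun ℓ => 2 ≤ ℓ ∧ ℓ ≤ a)
      have hneg : G.filter (fun ℓ => ¬(2 ≤ ℓ ∧ ℓ ≤ a)) = insert 1 (G.filter (fun ℓ => a < ℓ)) := by
        ext w
        simp only [Finset.mem_filter, Finset.mem_insert]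
        constructor
        · rintro ⟨hw, hw2⟩
          have hw0 : w ≠ 0 := fun h => F.gap.1 (h ▸ hw)
          rcases Nat.lt_or_ge a w with h | h
          · exact Or.inr ⟨hw, h⟩
          · left; omega
        · rintro (rfl | ⟨hw, hw2⟩)
          · exact ⟨F.one_mem, by omega⟩
          · exact ⟨hw, by omega⟩
      rw [hneg, Finset.card_insert_of_notMem (by
        simp only [Finset.mem_filter]
        rintro ⟨_, h⟩
        omega)] at hsplit
      omega
    · intro l1 h1 l2 h2 he
      simp only [Finset.coe_filter, Set.mem_setOf_eq] at h1 h2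
      have he' : l1 - 2 = l2 - 2 := he
      omega
    · intro l1 h1 l2 h2 he
      simp only [Finset.coe_filter, Set.mem_setOf_eq] at h1 h2
      have he' : l1 - 1 = l2 - 1 := he
      omega
  · rw [Finset.disjoint_left]
    rintro w hw hw2
    simp only [Finset.mem_image, Finset.mem_filter] at hw hw2
    obtain ⟨l1, ⟨hl1, h2, h3⟩, h4⟩ := hw
    obtain ⟨l2, ⟨hl2, h5⟩, h6⟩ := hw2
    have : l2 = l1 + 1 := by omega
    have : l2 = a + 1 := by omega
    exact F.not_mem_int (by omega) (by omega) (this ▸ hl2)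

lemma mono_unshift (F : Fx κ G a) {l1 l2 : ℕ} (h2 : l2 ∈ G) (h1 : 2 ≤ l1) (hlt : l1 < l2) :
    l1 - (if l1 ≤ a then 1 else 2) < l2 - (if l2 ≤ a then 1 else 2) := by
  have hκ := F.hκ2
  rcases F.gapint l2 h2 with h | h <;> split_ifs <;> omega

lemma psi_mem_of_mem (F : Fx κ G a) {ℓ : ℕ} (h : ℓ ∈ G) (h2 : 2 ≤ ℓ) :
    ℓ - (if ℓ ≤ a then 1 else 2) ∈ psi a G := by
  have ha := F.a_ge
  have hκ := F.hκ2
  rw [mem_psi (by omega)]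
  split_ifs with hc
  · left; refine ⟨by omega, ?_, by omega⟩
    have : ℓ - 1 + 1 = ℓ := by omega
    rw [this]; exact h
  · right
    have hb : a + κ ≤ ℓ := by
      rcases F.gapint ℓ h with h' | h' <;> omega
    refine ⟨?_, by omega⟩
    have : ℓ - 2 + 2 = ℓ := by omega
    rw [this]; exact h

lemma consec_psi (F : Fx κ G a) {u v : ℕ} (h : Consec (psi a G) u v) :
    ∃ c d, Consec G c d ∧ 2 ≤ c ∧
      u = c - (if c ≤ a then 1 else 2) ∧ v = d - (if d ≤ a then 1 else 2) := by
  obtain ⟨hu, hv, huv, hbet⟩ := h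
  have hκ := F.hκ2
  have ha := F.a_ge
  rw [mem_psi (by omega)] at hu hv
  have hc : ∃ c ∈ G, 2 ≤ c ∧ u = c - (if c ≤ a then 1 else 2) := by
    rcases hu with ⟨h1, h2, h3⟩ | ⟨h1, h2⟩
    · exact ⟨u + 1, h2, by omega, by rw [if_pos h3]; omega⟩
    · exact ⟨u + 2, h1, by omega, by rw [if_neg (by omega)]; omega⟩
  obtain ⟨c, hcG, hc2, hue⟩ := hc
  have hd : ∃ d ∈ G, 2 ≤ d ∧ v = d - (if d ≤ a then 1 else 2) := by
    rcases hv with ⟨h1, h2, h3⟩ | ⟨h1, h2⟩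
    · exact ⟨v + 1, h2, by omega, by rw [if_pos h3]; omega⟩
    · exact ⟨v + 2, h1, by omega, by rw [if_neg (by omega)]; omega⟩
  obtain ⟨d, hdG, hd2, hve⟩ := hd
  have hcd : c < d := by
    by_contra hge
    rcases Nat.lt_or_ge d c with hlt | hle
    · have := mono_unshift F hcG hd2 hlt; omega
    · have : c = d := by omega
      subst this
      split_ifs at hue hve <;> omega
  refine ⟨c, d, ⟨hcG, hdG, hcd, ?_⟩, hc2, hue, hve⟩
  intro e heG
  by_contra hbad
  push_neg at hbad
  have he2 : 2 ≤ e := by omega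
  have he1 := mono_unshift F heG hc2 hbad.1
  have he2' := mono_unshift F hdG he2 hbad.2
  have hes := psi_mem_of_mem F heG he2
  rcases hbet _ hes with h | h <;> omega

lemma psi_jump_consec (hκ3 : 3 ≤ κ) (F : Fx κ G a) : Consec (psi a G) (a-1) (a + κ - 2) := by
  have hκ := F.hκ2
  have ha := F.a_ge
  have hage : 1 ≤ a := by
    have := F.mge; have := F.mlea; omega
  refine ⟨?_, ?_, by omega, ?_⟩
  · rw [mem_psi hage]
    left
    refine ⟨by omega, ?_, by omega⟩
    have : a - 1 + 1 = a := by omega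
    rw [this]; exact F.aG
  · rw [mem_psi hage]
    right
    constructor
    · have : a + κ - 2 + 2 = a + κ := by omega
      rw [this]; exact F.bG
    · omega
  · intro w hw
    rw [mem_psi hage] at hw
    rcases hw with ⟨h1, h2, h3⟩ | ⟨h1, h2⟩
    · omega
    · have : a + κ ≤ w + 2 := by
        rcases F.gapint _ h1 with h' | h' <;> omega
      omega

end S19

namespace S19

lemma psi_pure {n : ℕ} {G : Finset ℕ} {a : ℕ} (hn : 0 < n) (F : Fx (2*n+1) G a)
    (huniq : ∀ c, Consec G c (c + (2*n+1)) → c = a) :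
    PureSparse (2*n) (psi a G) := by
  have ha := F.a_ge
  constructor
  · intro u v h
    obtain ⟨c, d, hcd, hc2, hue, hve⟩ := consec_psi F h
    have hdle := F.dle c d hcd
    have hlt := hcd.2.2.1
    rcases Nat.lt_or_ge (d - c) (2*n+1) with hsm | hbig
    · split_ifs at hue hve <;> omega
    · have hde : d = c + (2*n+1) := by omega
      have hca : c = a := huniq c (hde ▸ hcd)
      subst hca
      rw [if_pos (le_refl c)] at hue
      rw [hde, if_neg (by omega)] at hve
      omega
  · refine ⟨a - 1, a + (2*n+1) - 2, psi_jump_consec (by omega) F, by omega⟩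

lemma psi_gapset {n : ℕ} {G : Finset ℕ} {a : ℕ} (hn : 0 < n) (F : Fx (2*n+1) G a)
    (hcard : G.card = 3*n+2) (hE : ¬((2*n+1) ∉ G ∧ 4*n+1 ∈ G)) :
    IsGapset (psi a G) := by
  have hm := F.mge
  have hma := F.mlea
  have hmnot : mult G ∉ G := mult_not_mem
  have hgap := F.gap.2
  have hFle : ∀ ℓ ∈ G, ℓ ≤ 6*n+3 := fun ℓ hl => by
    have := F.Fle ℓ hl; omega
  have haub : a ≤ 4*n+2 := by have := hFle _ F.bG; omega
  have halb : 2*n ≤ a := by omega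
  have ha1 : 1 ≤ a := by omega
  have hsubm : ∀ k, 0 < k → k + 2 ≤ mult G → k ∈ psi a G := by
    intro k hk0 hkm
    rw [mem_psi ha1]
    exact Or.inl ⟨by omega, F.mem_of_lt_mult (by omega) (by omega), by omega⟩
  have ham1 : a - 1 ∈ psi a G := by
    rw [mem_psi ha1]
    left
    refine ⟨by omega, ?_, by omega⟩
    have : a - 1 + 1 = a := by omega
    rw [this]; exact F.aG
  constructor
  · intro h
    rw [mem_psi ha1] at h
    rcases h with ⟨h1, _, _⟩ | ⟨h1, h2⟩
    · omega
    · omega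
  intro z hz x0 y0 hx0 hy0 hsum0
  by_contra hcon
  push_neg at hcon
  obtain ⟨hxn0, hyn0⟩ := hcon
  have claim : ∀ x y, 0 < x → 0 < y → x ≤ y → z = x + y →
      x ∉ psi a G → y ∉ psi a G → False := by
    intro x y hx hy hxy hsum hxn hyn
    have key1 : ∀ w, w ∉ psi a G → w + 1 ≤ a → 0 < w → (w + 1) ∉ G := by
      intro w hw hwa hw0 hmem
      exact hw ((mem_psi ha1).mpr (Or.inl ⟨by omega, hmem, hwa⟩))
    have key2 : ∀ w, w ∉ psi a G → a < w + 2 → (w + 2) ∉ G := by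
      intro w hw hwa hmem
      exact hw ((mem_psi ha1).mpr (Or.inr ⟨hmem, hwa⟩))
    have hxm : mult G - 1 ≤ x := by
      by_contra h
      exact hxn (hsubm x hx (by omega))
    have hym : mult G - 1 ≤ y := by
      by_contra h
      exact hyn (hsubm y hy (by omega))
    have hxa1 : x ≠ a - 1 := fun h => hxn (h ▸ ham1)
    have hya1 : y ≠ a - 1 := fun h => hyn (h ▸ ham1)
    rw [mem_psi ha1] at hz
    rcases hz with ⟨hz1, hw, hwa⟩ | ⟨hw, hwa⟩
    · -- CASE 1': w = z+1 ≤ a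
      have hwlb : 2 * mult G - 1 ≤ z + 1 := by omega
      have hwub : z + 1 ≤ 4*n + 2 := by omega
      have hmeq : mult G = 2*n+1 := by omega
      rcases Nat.eq_or_lt_of_le hwub with he | he
      · -- z+1 = 4n+2
        rcases hgap (z+1) hw (2*n+1) (2*n+1) (by omega) (by omega) (by omega) with h | h <;>
          exact hmnot (hmeq ▸ h)
      · -- z+1 = 4n+1
        have : z + 1 = 4*n+1 := by omega
        exact hE ⟨hmeq ▸ hmnot, this ▸ hw⟩
    · -- CASE 2' : w = z + 2 > a
      have hwb : a + (2*n+1) ≤ z + 2 := by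
        rcases F.gapint _ hw with h | h <;> omega
      rcases Nat.lt_or_ge y a with hya | hyb
      · -- y ≤ a - 1, so both small
        have hxa : x ≤ a - 2 := by omega
        have hya' : y ≤ a - 2 := by omega
        have hx1 : (x+1) ∉ G := key1 x hxn (by omega) hx
        have hy1 : (y+1) ∉ G := key1 y hyn (by omega) hy
        rcases hgap (z+2) hw (x+1) (y+1) (by omega) (by omega) (by omega) with h | h
        · exact hx1 h
        · exact hy1 h
      · -- y ≥ a
        rcases Nat.lt_or_ge x a with hxa | hxb
        · -- x ≤ a - 1 (hence ≤ a-2), y ≥ a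
          have hxa' : x ≤ a - 2 := by omega
          have hx1 : (x+1) ∉ G := key1 x hxn (by omega) hx
          rcases Nat.eq_or_lt_of_le hyb with hye | hyg
          · -- y = a
            have ha1' : a + 1 ∉ G := F.not_mem_int (by omega) (by omega)
            rcases hgap (z+2) hw (x+1) (a+1) (by omega) (by omega) (by omega) with h | h
            · exact hx1 h
            · exact ha1' h
          · -- y ≥ a + 1
            have hy2 : (y+2) ∉ G := key2 y hyn (by omega)
            have hy1G : (y+1) ∈ G := by
              rcases hgap (z+2) hw (x+1) (y+1) (by omega) (by omega) (by omega) with h | h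
              · exact absurd h hx1
              · exact h
            have hy1b : a + (2*n+1) ≤ y + 1 := by
              rcases F.gapint _ hy1G with h | h <;> omega
            rcases hgap (z+2) hw (x+2) y (by omega) (by omega) (by omega) with h | h
            · -- x + 2 ∈ G
              have hx2a : x + 2 ≤ a := by
                rcases F.gapint _ h with h' | h' <;> omega
              have hx2m : mult G + 1 ≤ x + 2 := by
                by_contra hcon2
                have : x + 2 = mult G := by omega
                exact hmnot (this ▸ h)
              have hzF := hFle _ hw
              omega
            · -- y ∈ G
              have hyB : a + (2*n+1) ≤ y := by
                rcases F.gapint _ h with h' | h' <;> omega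
              have hzF := hFle _ hw
              have hda : a = 2*n ∧ mult G = 2*n+1 := by omega
              rcases Nat.eq_or_lt_of_le hyB with hye | hyg2
              · exact hE ⟨hda.2 ▸ hmnot, by
                  have : y = 4*n+1 := by omega
                  exact this ▸ h⟩
              · omega
        · -- x ≥ a
          rcases Nat.eq_or_lt_of_le hxb with hxe | hxg
          · -- x = a
            rcases Nat.eq_or_lt_of_le hyb with hye | hyg
            · -- y = a
              have ha1' : a + 1 ∉ G := F.not_mem_int (by omega) (by omega)
              rcases hgap (z+2) hw (a+1) (a+1) (by omega) (by omega) (by omega) with h | h <;>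
                exact ha1' h
            · -- y ≥ a + 1
              have hy2 : (y+2) ∉ G := key2 y hyn (by omega)
              have ha1' : a + 1 ∉ G := F.not_mem_int (by omega) (by omega)
              have hy1G : (y+1) ∈ G := by
                rcases hgap (z+2) hw (a+1) (y+1) (by omega) (by omega) (by omega) with h | h
                · exact absurd h ha1'
                · exact h
              have hy1b : a + (2*n+1) ≤ y + 1 := by
                rcases F.gapint _ hy1G with h | h <;> omega
              have hzF := hFle _ hw
              have hae : a = 2*n := by omega
              have hmeq : mult G = 2*n+1 := by omega
              rcases Nat.eq_or_lt_of_le hy1b with hye | hyg2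
              · -- y + 1 = 4n+1
                exact hE ⟨hmeq ▸ hmnot, by
                  have : y + 1 = 4*n+1 := by omega
                  exact this ▸ hy1G⟩
              · -- y = 4n+1, w = 6n+3
                have hye2 : y = 4*n+1 := by omega
                have h42 : (4*n+2) ∈ G := by
                  rcases hgap (z+2) hw (2*n+1) (4*n+2) (by omega) (by omega) (by omega)
                    with h | h
                  · exact absurd h (hmeq ▸ hmnot)
                  · exact h
                rcases hgap (4*n+2) h42 (2*n+1) (2*n+1) (by omega) (by omega) (by omega)
                  with h | h <;> exact (hmeq ▸ hmnot) h
          · -- x ≥ a + 1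
            have hx2 : (x+2) ∉ G := key2 x hxn (by omega)
            have hy2 : (y+2) ∉ G := key2 y hyn (by omega)
            have hyG : y ∈ G := by
              rcases hgap (z+2) hw (x+2) y (by omega) (by omega) (by omega) with h | h
              · exact absurd h hx2
              · exact h
            have hxG : x ∈ G := by
              rcases hgap (z+2) hw x (y+2) (by omega) (by omega) (by omega) with h | h
              · exact h
              · exact absurd h hy2
            have hxB : a + (2*n+1) ≤ x := by
              rcases F.gapint _ hxG with h | h <;> omega
            have hyB : a + (2*n+1) ≤ y := by
              rcases F.gapint _ hyG with h | h <;> omega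
            have hzF := hFle _ hw
            omega
  rcases Nat.le_total x0 y0 with h | h
  · exact claim x0 y0 hx0 hy0 h hsum0 hxn0 hyn0
  · exact claim y0 x0 hy0 hx0 h (by omega) hyn0 hxn0

lemma psi_notE {n : ℕ} {G : Finset ℕ} {a : ℕ} (hn : 0 < n) (F : Fx (2*n+1) G a)
    (hcard : G.card = 3*n+2) :
    ¬(2*n ∉ psi a G ∧ 4*n+1 ∈ psi a G) := by
  rintro ⟨h1, h2⟩
  have hm := F.mge
  have hma := F.mlea
  have hmnot : mult G ∉ G := mult_not_mem
  have hgap := F.gap.2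
  have hFle : ∀ ℓ ∈ G, ℓ ≤ 6*n+3 := fun ℓ hl => by
    have := F.Fle ℓ hl; omega
  have haub : a ≤ 4*n+2 := by have := hFle _ F.bG; omega
  have halb : 2*n ≤ a := by omega
  have ha1 : 1 ≤ a := by omega
  have h42 : (4*n+2) ∉ G → (2*n+1) ∉ G → True := fun _ _ => trivial
  rcases Nat.eq_or_lt_of_le halb with hae | hag
  · -- a = 2n, mult = 2n+1
    have hmeq : mult G = 2*n+1 := by omega
    have h43 : (4*n+3) ∈ G := by
      rw [mem_psi ha1] at h2
      rcases h2 with ⟨_, h, hle⟩ | ⟨h, _⟩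
      · omega
      · exact h
    have h22 : (2*n+2) ∈ G := by
      rcases hgap (4*n+3) h43 (2*n+1) (2*n+2) (by omega) (by omega) (by omega) with h | h
      · exact absurd h (hmeq ▸ hmnot)
      · exact h
    exact F.not_mem_int (by omega) (by omega) h22
  · -- a ≥ 2n+1
    have h21 : (2*n+1) ∉ G := by
      intro hmem
      exact h1 ((mem_psi ha1).mpr (Or.inl ⟨by omega, hmem, by omega⟩))
    have hmeq : mult G = 2*n+1 := by
      by_contra h
      exact h21 (F.mem_of_lt_mult (by omega) (by omega))
    have h42' : (4*n+2) ∉ G := by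
      intro hmem
      rcases hgap (4*n+2) hmem (2*n+1) (2*n+1) (by omega) (by omega) (by omega) with h | h <;>
        exact h21 h
    rw [mem_psi ha1] at h2
    rcases h2 with ⟨_, h, hle⟩ | ⟨h, _⟩
    · exact h42' h
    · -- 4n+3 ∈ G, a < 4n+3
      have h43b : a + (2*n+1) ≤ 4*n+3 := by
        rcases F.gapint _ h with h' | h' <;> omega
      have hane : a ≠ 2*n+1 := by
        intro he
        exact h21 (he ▸ F.aG)
      have hae : a = 2*n+2 := by omega
      -- no elements > 4n+3
      have htail : ∀ e ∈ G, e ≤ 4*n+3 := by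
        intro e he
        by_contra hbig
        push_neg at hbig
        have he1 : e - (2*n+1) ∈ G := by
          rcases hgap e he (2*n+1) (e - (2*n+1)) (by omega) (by omega) (by omega) with h' | h'
          · exact absurd h' h21
          · exact h'
        have heF := hFle e he
        have : e - (2*n+1) ≤ a ∨ a + (2*n+1) ≤ e - (2*n+1) := F.gapint _ he1
        omega
      -- G ⊆ Icc 1 (2n) ∪ {2n+2, 4n+3}
      have hsub : G ⊆ Finset.Icc 1 (2*n) ∪ {2*n+2, 4*n+3} := by
        intro w hw
        have hw0 : w ≠ 0 := fun hh => F.gap.1 (hh ▸ hw)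
        have hwt := htail w hw
        have hwi := F.gapint w hw
        simp only [Finset.mem_union, Finset.mem_Icc, Finset.mem_insert, Finset.mem_singleton]
        rcases hwi with h' | h'
        · -- w ≤ a = 2n+2
          rcases Nat.lt_or_ge w (2*n+1) with hc | hc
          · left; omega
          · right
            have : w ≠ 2*n+1 := fun hh => h21 (hh ▸ hw)
            left; omega
        · right; right; omega
      have hcard2 := Finset.card_le_card hsub
      have : (Finset.Icc 1 (2*n) ∪ {2*n+2, 4*n+3}).card ≤ 2*n + 2 := by
        refine le_trans (Finset.card_union_le _ _) ?_
        have h1' : (Finset.Icc 1 (2*n)).card = 2*n := by rw [Nat.card_Icc]; omega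
        have h2' : ({2*n+2, 4*n+3} : Finset ℕ).card ≤ 2 := Finset.card_insert_le _ _ |>.trans
          (by simp)
        omega
      omega

lemma psi_inj_aux {κ : ℕ} {G G2 : Finset ℕ} {a : ℕ} (F : Fx κ G a) (F2 : Fx κ G2 a)
    (h : psi a G ⊆ psi a G2) : G ⊆ G2 := by
  intro ℓ hl
  have hκ := F.hκ2
  have ha := F.a_ge
  have ha1 : 1 ≤ a := by have := F.mge; have := F.mlea; omega
  have hpos : 1 ≤ ℓ := by
    rcases Nat.eq_zero_or_pos ℓ with h0 | h0
    · exact absurd (h0 ▸ hl) F.gap.1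
    · omega
  rcases Nat.eq_or_lt_of_le hpos with h1 | h1
  · exact h1 ▸ F2.one_mem
  rcases le_or_gt ℓ a with hla | hla
  · have hmem := h (psi_mem_of_mem F hl (by omega))
    rw [if_pos hla] at hmem
    rw [mem_psi ha1] at hmem
    rcases hmem with ⟨_, hm, hle⟩ | ⟨hm, hgt⟩
    · have : ℓ - 1 + 1 = ℓ := by omega
      rwa [this] at hm
    · have : ℓ - 1 + 2 = a + 1 := by omega
      rw [this] at hm
      exact absurd hm (F2.not_mem_int (by omega) (by omega))
  · have hlb : a + κ ≤ ℓ := by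
      rcases F.gapint ℓ hl with h' | h' <;> omega
    have hmem := h (psi_mem_of_mem F hl (by omega))
    rw [if_neg (by omega)] at hmem
    rw [mem_psi ha1] at hmem
    rcases hmem with ⟨_, hm, hle⟩ | ⟨hm, hgt⟩
    · omega
    · have : ℓ - 2 + 2 = ℓ := by omega
      rwa [this] at hm

end S19

namespace S19

def W (n : ℕ) : Finset ℕ := Finset.Icc (2*n+2) (3*n)

def Ecal (n : ℕ) (L : Finset ℕ) : Finset ℕ :=
  (Finset.Icc 1 (2*n-1) ∪ {2*n+1, 4*n+1, 6*n+1}) ∪ (L ∪ (W n \ L).image (fun x => 6*n+1 - x))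

def Bcal (n : ℕ) (L : Finset ℕ) : Finset ℕ :=
  (Finset.Icc 1 (2*n) ∪ {3*n+1, 4*n+1, 6*n+2}) ∪ (L ∪ (W n \ L).image (fun x => 6*n+2 - x))

lemma mem_Ecal {n : ℕ} {L : Finset ℕ} (hL : L ⊆ W n) {w : ℕ} :
    w ∈ Ecal n L ↔ (1 ≤ w ∧ w ≤ 2*n-1) ∨ w = 2*n+1 ∨ w = 4*n+1 ∨ w = 6*n+1 ∨
      w ∈ L ∨ (∃ x, 2*n+2 ≤ x ∧ x ≤ 3*n ∧ x ∉ L ∧ w = 6*n+1 - x) := by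
  simp only [Ecal, W, Finset.mem_union, Finset.mem_Icc, Finset.mem_insert,
    Finset.mem_singleton, Finset.mem_image, Finset.mem_sdiff]
  constructor
  · rintro ((h | h | h | h) | (h | ⟨x, ⟨⟨hx1, hx2⟩, hx3⟩, hx4⟩))
    · exact Or.inl h
    · exact Or.inr (Or.inl h)
    · exact Or.inr (Or.inr (Or.inl h))
    · exact Or.inr (Or.inr (Or.inr (Or.inl h)))
    · exact Or.inr (Or.inr (Or.inr (Or.inr (Or.inl h))))
    · exact Or.inr (Or.inr (Or.inr (Or.inr (Or.inr ⟨x, hx1, hx2, hx3, hx4.symm⟩))))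
  · rintro (h | h | h | h | h | ⟨x, hx1, hx2, hx3, hx4⟩)
    · exact Or.inl (Or.inl h)
    · exact Or.inl (Or.inr (Or.inl h))
    · exact Or.inl (Or.inr (Or.inr (Or.inl h)))
    · exact Or.inl (Or.inr (Or.inr (Or.inr h)))
    · exact Or.inr (Or.inl h)
    · exact Or.inr (Or.inr ⟨x, ⟨⟨hx1, hx2⟩, hx3⟩, hx4.symm⟩)

lemma mem_Bcal {n : ℕ} {L : Finset ℕ} (hL : L ⊆ W n) {w : ℕ} :
    w ∈ Bcal n L ↔ (1 ≤ w ∧ w ≤ 2*n) ∨ w = 3*n+1 ∨ w = 4*n+1 ∨ w = 6*n+2 ∨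
      w ∈ L ∨ (∃ x, 2*n+2 ≤ x ∧ x ≤ 3*n ∧ x ∉ L ∧ w = 6*n+2 - x) := by
  simp only [Bcal, W, Finset.mem_union, Finset.mem_Icc, Finset.mem_insert,
    Finset.mem_singleton, Finset.mem_image, Finset.mem_sdiff]
  constructor
  · rintro ((h | h | h | h) | (h | ⟨x, ⟨⟨hx1, hx2⟩, hx3⟩, hx4⟩))
    · exact Or.inl h
    · exact Or.inr (Or.inl h)
    · exact Or.inr (Or.inr (Or.inl h))
    · exact Or.inr (Or.inr (Or.inr (Or.inl h)))
    · exact Or.inr (Or.inr (Or.inr (Or.inr (Or.inl h))))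
    · exact Or.inr (Or.inr (Or.inr (Or.inr (Or.inr ⟨x, hx1, hx2, hx3, hx4.symm⟩))))
  · rintro (h | h | h | h | h | ⟨x, hx1, hx2, hx3, hx4⟩)
    · exact Or.inl (Or.inl h)
    · exact Or.inl (Or.inr (Or.inl h))
    · exact Or.inl (Or.inr (Or.inr (Or.inl h)))
    · exact Or.inl (Or.inr (Or.inr (Or.inr h)))
    · exact Or.inr (Or.inl h)
    · exact Or.inr (Or.inr ⟨x, ⟨⟨hx1, hx2⟩, hx3⟩, hx4.symm⟩)

lemma memL_bounds {n : ℕ} {L : Finset ℕ} (hL : L ⊆ W n) {w : ℕ} (h : w ∈ L) :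
    2*n+2 ≤ w ∧ w ≤ 3*n := by
  have := hL h
  simp only [W, Finset.mem_Icc] at this
  exact this

lemma Ecal_inter_W {n : ℕ} {L : Finset ℕ} (hn : 0 < n) (hL : L ⊆ W n) :
    Ecal n L ∩ W n = L := by
  ext w
  simp only [Finset.mem_inter, W, Finset.mem_Icc]
  constructor
  · rintro ⟨hw, hw1, hw2⟩
    rcases (mem_Ecal hL).mp hw with h | h | h | h | h | ⟨x, hx1, hx2, hx3, hx4⟩ <;>
      first
        | omega
        | exact h
        | (exfalso; omega)
  · intro h
    have := memL_bounds hL h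
    exact ⟨(mem_Ecal hL).mpr (Or.inr (Or.inr (Or.inr (Or.inr (Or.inl h))))), by omega, by omega⟩

lemma Bcal_inter_W {n : ℕ} {L : Finset ℕ} (hn : 0 < n) (hL : L ⊆ W n) :
    Bcal n L ∩ W n = L := by
  ext w
  simp only [Finset.mem_inter, W, Finset.mem_Icc]
  constructor
  · rintro ⟨hw, hw1, hw2⟩
    rcases (mem_Bcal hL).mp hw with h | h | h | h | h | ⟨x, hx1, hx2, hx3, hx4⟩ <;>
      first
        | omega
        | exact h
        | (exfalso; omega)
  · intro h
    have := memL_bounds hL h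
    exact ⟨(mem_Bcal hL).mpr (Or.inr (Or.inr (Or.inr (Or.inr (Or.inl h))))), by omega, by omega⟩

lemma Ecal_card {n : ℕ} {L : Finset ℕ} (hn : 0 < n) (hL : L ⊆ W n) :
    (Ecal n L).card = 3*n + 1 := by
  classical
  have hWcard : (W n).card = n - 1 := by
    simp only [W, Nat.card_Icc]; omega
  have himg : ((W n \ L).image (fun x => 6*n+1 - x)).card = (W n \ L).card := by
    apply Finset.card_image_of_injOn
    intro x hx y hy he
    simp only [Finset.coe_sdiff, Set.mem_diff, Finset.mem_coe, W, Finset.mem_Icc] at hx hy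
    have he' : 6*n+1 - x = 6*n+1 - y := he
    omega
  have hLsplit : L.card + (W n \ L).card = n - 1 := by
    have := Finset.card_sdiff_add_card_eq_card hL
    omega
  rw [Ecal]
  rw [Finset.card_union_of_disjoint, Finset.card_union_of_disjoint, Finset.card_union_of_disjoint]
  · rw [himg, Nat.card_Icc]
    have h3 : ({2*n+1, 4*n+1, 6*n+1} : Finset ℕ).card = 3 := by
      rw [Finset.card_insert_of_notMem (by simp; omega),
        Finset.card_insert_of_notMem (by simp; omega), Finset.card_singleton]
    omega
  · -- L disjoint from image
    rw [Finset.disjoint_left]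
    intro w hw hw2
    have hb := memL_bounds hL hw
    simp only [Finset.mem_image, Finset.mem_sdiff, W, Finset.mem_Icc] at hw2
    obtain ⟨x, ⟨⟨hx1, hx2⟩, _⟩, hx3⟩ := hw2
    omega
  · -- Icc disjoint {…}
    rw [Finset.disjoint_left]
    intro w hw hw2
    simp only [Finset.mem_Icc] at hw
    simp only [Finset.mem_insert, Finset.mem_singleton] at hw2
    omega
  · -- (Icc ∪ {..}) disjoint (L ∪ image)
    rw [Finset.disjoint_left]
    intro w hw hw2
    simp only [Finset.mem_union, Finset.mem_Icc, Finset.mem_insert, Finset.mem_singleton] at hw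
    simp only [Finset.mem_union, Finset.mem_image, Finset.mem_sdiff, W, Finset.mem_Icc] at hw2
    rcases hw2 with hw2 | ⟨x, ⟨⟨hx1, hx2⟩, _⟩, hx3⟩
    · have hb := memL_bounds hL hw2
      omega
    · omega

lemma Bcal_card {n : ℕ} {L : Finset ℕ} (hn : 0 < n) (hL : L ⊆ W n) :
    (Bcal n L).card = 3*n + 2 := by
  classical
  have hWcard : (W n).card = n - 1 := by
    simp only [W, Nat.card_Icc]; omega
  have himg : ((W n \ L).image (fun x => 6*n+2 - x)).card = (W n \ L).card := by
    apply Finset.card_image_of_injOn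
    intro x hx y hy he
    simp only [Finset.coe_sdiff, Set.mem_diff, Finset.mem_coe, W, Finset.mem_Icc] at hx hy
    have he' : 6*n+2 - x = 6*n+2 - y := he
    omega
  have hLsplit : L.card + (W n \ L).card = n - 1 := by
    have := Finset.card_sdiff_add_card_eq_card hL
    omega
  rw [Bcal]
  rw [Finset.card_union_of_disjoint, Finset.card_union_of_disjoint, Finset.card_union_of_disjoint]
  · rw [himg, Nat.card_Icc]
    have h3 : ({3*n+1, 4*n+1, 6*n+2} : Finset ℕ).card = 3 := by
      rw [Finset.card_insert_of_notMem (by simp; omega),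
        Finset.card_insert_of_notMem (by simp; omega), Finset.card_singleton]
    omega
  · rw [Finset.disjoint_left]
    intro w hw hw2
    have hb := memL_bounds hL hw
    simp only [Finset.mem_image, Finset.mem_sdiff, W, Finset.mem_Icc] at hw2
    obtain ⟨x, ⟨⟨hx1, hx2⟩, _⟩, hx3⟩ := hw2
    omega
  · rw [Finset.disjoint_left]
    intro w hw hw2
    simp only [Finset.mem_Icc] at hw
    simp only [Finset.mem_insert, Finset.mem_singleton] at hw2
    omega
  · rw [Finset.disjoint_left]
    intro w hw hw2
    simp only [Finset.mem_union, Finset.mem_Icc, Finset.mem_insert, Finset.mem_singleton] at hw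
    simp only [Finset.mem_union, Finset.mem_image, Finset.mem_sdiff, W, Finset.mem_Icc] at hw2
    rcases hw2 with hw2 | ⟨x, ⟨⟨hx1, hx2⟩, _⟩, hx3⟩
    · have hb := memL_bounds hL hw2
      omega
    · omega

end S19

namespace S19

variable {n : ℕ} {L : Finset ℕ}

lemma Ecal_ub (hL : L ⊆ W n) : ∀ w ∈ Ecal n L, 1 ≤ w ∧ w ≤ 6*n+1 := by
  intro w hw
  rcases (mem_Ecal hL).mp hw with h | h | h | h | h | ⟨x, hx1, hx2, hx3, hx4⟩
  · omega
  · omega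
  · omega
  · omega
  · have := memL_bounds hL h; omega
  · omega

lemma Bcal_ub (hL : L ⊆ W n) : ∀ w ∈ Bcal n L, 1 ≤ w ∧ w ≤ 6*n+2 := by
  intro w hw
  rcases (mem_Bcal hL).mp hw with h | h | h | h | h | ⟨x, hx1, hx2, hx3, hx4⟩
  · omega
  · omega
  · omega
  · omega
  · have := memL_bounds hL h; omega
  · omega

lemma Ecal_gapset (hn : 0 < n) (hL : L ⊆ W n) : IsGapset (Ecal n L) := by
  constructor
  · intro h
    have := (Ecal_ub hL 0 h).1
    omega
  intro z hz x0 y0 hx0 hy0 hsum0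
  have claim : ∀ x y, 0 < x → x ≤ y → z = x + y → x ∈ Ecal n L ∨ y ∈ Ecal n L := by
    intro x y hx hxy hsum
    rcases Nat.lt_or_ge x (2*n) with hxs | hxb
    · exact Or.inl ((mem_Ecal hL).mpr (Or.inl ⟨by omega, by omega⟩))
    · have hztop : z = 4*n+1 ∨ z = 6*n+1 := by
        rcases (mem_Ecal hL).mp hz with h | h | h | h | h | ⟨x', hx1, hx2, hx3, hx4⟩
        · omega
        · omega
        · omega
        · omega
        · have := memL_bounds hL h; omega
        · omega
      rcases hztop with hze | hze
      · -- z = 4n+1: x = 2n, y = 2n+1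
        have : y = 2*n+1 := by omega
        exact Or.inr ((mem_Ecal hL).mpr (Or.inr (Or.inl this)))
      · -- z = 6n+1
        rcases Nat.eq_or_lt_of_le hxb with he | he
        · exact Or.inr ((mem_Ecal hL).mpr (Or.inr (Or.inr (Or.inl (by omega)))))
        · rcases Nat.eq_or_lt_of_le he with he2 | he2
          · exact Or.inl ((mem_Ecal hL).mpr (Or.inr (Or.inl (by omega))))
          · -- x ≥ 2n+2, x ≤ 3n
            have hx3n : x ≤ 3*n := by omega
            by_cases hxL : x ∈ L
            · exact Or.inl ((mem_Ecal hL).mpr (Or.inr (Or.inr (Or.inr (Or.inr (Or.inl hxL))))))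
            · exact Or.inr ((mem_Ecal hL).mpr (Or.inr (Or.inr (Or.inr (Or.inr (Or.inr
                ⟨x, by omega, hx3n, hxL, by omega⟩))))))
  rcases Nat.le_total x0 y0 with h | h
  · exact claim x0 y0 hx0 h hsum0
  · rcases claim y0 x0 hy0 h (by omega) with h2 | h2
    · exact Or.inr h2
    · exact Or.inl h2

lemma Ecal_pure (hn : 0 < n) (hL : L ⊆ W n) : PureSparse (2*n) (Ecal n L) := by
  have h41 : 4*n+1 ∈ Ecal n L := (mem_Ecal hL).mpr (Or.inr (Or.inr (Or.inl rfl)))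
  have h61 : 6*n+1 ∈ Ecal n L := (mem_Ecal hL).mpr (Or.inr (Or.inr (Or.inr (Or.inl rfl))))
  constructor
  · intro u v hc
    have hnext : ∀ u ∈ Ecal n L, u < 6*n+1 → ∃ w ∈ Ecal n L, u < w ∧ w ≤ u + 2*n := by
      intro u hu hu6
      rcases (mem_Ecal hL).mp hu with h | h | h | h | h | ⟨x, hx1, hx2, hx3, hx4⟩
      · rcases Nat.lt_or_ge u (2*n-1) with h2 | h2
        · exact ⟨u+1, (mem_Ecal hL).mpr (Or.inl ⟨by omega, by omega⟩), by omega, by omega⟩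
        · exact ⟨2*n+1, (mem_Ecal hL).mpr (Or.inr (Or.inl rfl)), by omega, by omega⟩
      · exact ⟨4*n+1, h41, by omega, by omega⟩
      · exact ⟨6*n+1, h61, by omega, by omega⟩
      · omega
      · have := memL_bounds hL h
        exact ⟨4*n+1, h41, by omega, by omega⟩
      · exact ⟨4*n+1, h41, by omega, by omega⟩
    have hv6 := (Ecal_ub hL _ hc.2.1).2
    have hu6 : u < 6*n+1 := by
      have := hc.2.2.1; omega
    obtain ⟨w, hw, hw1, hw2⟩ := hnext u hc.1 hu6
    rcases hc.2.2.2 w hw with h | h <;> omega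
  · refine ⟨4*n+1, 6*n+1, ⟨h41, h61, by omega, ?_⟩, by omega⟩
    intro c hc
    rcases (mem_Ecal hL).mp hc with h | h | h | h | h | ⟨x, hx1, hx2, hx3, hx4⟩
    · omega
    · omega
    · omega
    · omega
    · have := memL_bounds hL h; omega
    · omega

lemma Ecal_cond (hn : 0 < n) (hL : L ⊆ W n) : 2*n ∉ Ecal n L ∧ 4*n+1 ∈ Ecal n L := by
  constructor
  · intro h
    rcases (mem_Ecal hL).mp h with h | h | h | h | h | ⟨x, hx1, hx2, hx3, hx4⟩
    · omega
    · omega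
    · omega
    · omega
    · have := memL_bounds hL h; omega
    · omega
  · exact (mem_Ecal hL).mpr (Or.inr (Or.inr (Or.inl rfl)))

lemma Bcal_gapset (hn : 0 < n) (hL : L ⊆ W n) : IsGapset (Bcal n L) := by
  constructor
  · intro h
    have := (Bcal_ub hL 0 h).1
    omega
  intro z hz x0 y0 hx0 hy0 hsum0
  have claim : ∀ x y, 0 < x → x ≤ y → z = x + y → x ∈ Bcal n L ∨ y ∈ Bcal n L := by
    intro x y hx hxy hsum
    rcases Nat.lt_or_ge x (2*n+1) with hxs | hxb
    · exact Or.inl ((mem_Bcal hL).mpr (Or.inl ⟨by omega, by omega⟩))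
    · have hztop : z = 6*n+2 := by
        rcases (mem_Bcal hL).mp hz with h | h | h | h | h | ⟨x', hx1, hx2, hx3, hx4⟩
        · omega
        · omega
        · omega
        · omega
        · have := memL_bounds hL h; omega
        · omega
      rcases Nat.eq_or_lt_of_le hxb with he | he
      · -- x = 2n+1, y = 4n+1
        exact Or.inr ((mem_Bcal hL).mpr (Or.inr (Or.inr (Or.inl (by omega)))))
      · -- x ≥ 2n+2, x ≤ 3n+1
        have hx3n : x ≤ 3*n+1 := by omega
        rcases Nat.eq_or_lt_of_le hx3n with he2 | he2
        · exact Or.inl ((mem_Bcal hL).mpr (Or.inr (Or.inl (by omega))))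
        · by_cases hxL : x ∈ L
          · exact Or.inl ((mem_Bcal hL).mpr (Or.inr (Or.inr (Or.inr (Or.inr (Or.inl hxL))))))
          · exact Or.inr ((mem_Bcal hL).mpr (Or.inr (Or.inr (Or.inr (Or.inr (Or.inr
              ⟨x, by omega, by omega, hxL, by omega⟩))))))
  rcases Nat.le_total x0 y0 with h | h
  · exact claim x0 y0 hx0 h hsum0
  · rcases claim y0 x0 hy0 h (by omega) with h2 | h2
    · exact Or.inr h2
    · exact Or.inl h2

lemma Bcal_pure (hn : 0 < n) (hL : L ⊆ W n) : PureSparse (2*n+1) (Bcal n L) := by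
  have h31 : 3*n+1 ∈ Bcal n L := (mem_Bcal hL).mpr (Or.inr (Or.inl rfl))
  have h41 : 4*n+1 ∈ Bcal n L := (mem_Bcal hL).mpr (Or.inr (Or.inr (Or.inl rfl)))
  have h62 : 6*n+2 ∈ Bcal n L := (mem_Bcal hL).mpr (Or.inr (Or.inr (Or.inr (Or.inl rfl))))
  constructor
  · intro u v hc
    have hnext : ∀ u ∈ Bcal n L, u < 6*n+2 → ∃ w ∈ Bcal n L, u < w ∧ w ≤ u + (2*n+1) := by
      intro u hu hu6
      rcases (mem_Bcal hL).mp hu with h | h | h | h | h | ⟨x, hx1, hx2, hx3, hx4⟩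
      · rcases Nat.lt_or_ge u (2*n) with h2 | h2
        · exact ⟨u+1, (mem_Bcal hL).mpr (Or.inl ⟨by omega, by omega⟩), by omega, by omega⟩
        · exact ⟨3*n+1, h31, by omega, by omega⟩
      · exact ⟨4*n+1, h41, by omega, by omega⟩
      · exact ⟨6*n+2, h62, by omega, by omega⟩
      · omega
      · have := memL_bounds hL h
        exact ⟨3*n+1, h31, by omega, by omega⟩
      · exact ⟨4*n+1, h41, by omega, by omega⟩
    have hv6 := (Bcal_ub hL _ hc.2.1).2
    have hu6 : u < 6*n+2 := by
      have := hc.2.2.1; omega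
    obtain ⟨w, hw, hw1, hw2⟩ := hnext u hc.1 hu6
    rcases hc.2.2.2 w hw with h | h <;> omega
  · refine ⟨4*n+1, 6*n+2, ⟨h41, h62, by omega, ?_⟩, by omega⟩
    intro c hc
    rcases (mem_Bcal hL).mp hc with h | h | h | h | h | ⟨x, hx1, hx2, hx3, hx4⟩
    · omega
    · omega
    · omega
    · omega
    · have := memL_bounds hL h; omega
    · omega

lemma Bcal_cond (hn : 0 < n) (hL : L ⊆ W n) : 2*n+1 ∉ Bcal n L ∧ 4*n+1 ∈ Bcal n L := by
  constructor
  · intro h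
    rcases (mem_Bcal hL).mp h with h | h | h | h | h | ⟨x, hx1, hx2, hx3, hx4⟩
    · omega
    · omega
    · omega
    · omega
    · have := memL_bounds hL h; omega
    · omega
  · exact (mem_Bcal hL).mpr (Or.inr (Or.inr (Or.inl rfl)))

end S19

namespace S19

lemma Ecal_complete {n : ℕ} {G : Finset ℕ} {a : ℕ} (hn : 0 < n) (F : Fx (2*n) G a)
    (hcard : G.card = 3*n+1) (h2n : 2*n ∉ G) (h41 : 4*n+1 ∈ G) :
    G = Ecal n (G ∩ W n) := by
  have hgap := F.gap.2
  have hFle : ∀ ℓ ∈ G, ℓ ≤ 6*n+1 := fun ℓ hl => by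
    have := F.Fle ℓ hl; omega
  have hmeq : mult G = 2*n := by
    have := F.mge
    by_contra h
    exact h2n (F.mem_of_lt_mult (by omega) (by omega))
  have h21 : 2*n+1 ∈ G := by
    rcases hgap _ h41 (2*n) (2*n+1) (by omega) (by omega) (by omega) with h | h
    · exact absurd h h2n
    · exact h
  have h4n : 4*n ∉ G := by
    intro h
    rcases hgap _ h (2*n) (2*n) (by omega) (by omega) (by omega) with h' | h' <;> exact h2n h'
  have hLsub : G ∩ W n ⊆ W n := Finset.inter_subset_right
  have hnm0 : ∀ w ∈ G, 1 ≤ w := by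
    intro w hw
    rcases Nat.eq_zero_or_pos w with h0 | h0
    · exact absurd (h0 ▸ hw) F.gap.1
    · omega
  by_cases hn1 : n = 1
  · -- n = 1 : G = {1,3,5,7}
    subst hn1
    have h6 : (6:ℕ) ∉ G := by
      intro h
      rcases hgap 6 h 2 4 (by omega) (by omega) (by omega) with h' | h'
      · exact h2n h'
      · exact h4n h'
    have hsub : G ⊆ ({1,3,5,7} : Finset ℕ) := by
      intro w hw
      have h7 := hFle w hw
      have h1 := hnm0 w hw
      simp only [Finset.mem_insert, Finset.mem_singleton]
      by_contra hc
      push_neg at hc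
      interval_cases w <;> simp_all
    have hGe : G = ({1,3,5,7} : Finset ℕ) :=
      Finset.eq_of_subset_of_card_le hsub (by rw [hcard]; decide)
    have hW1 : W 1 = ∅ := by decide
    rw [hGe, hW1]
    decide
  · -- n ≥ 2
    have hn2 : 2 ≤ n := by omega
    -- locate the jump : a = 4n+1
    have hb : 4*n+1 < a + 2*n := by
      by_contra hb2
      push_neg at hb2
      -- a ≤ 2n+1, a ≥ 2n-1, a ≠ 2n
      have ha1 : 2*n - 1 ≤ a := by have := F.mlea; omega
      have hane : a ≠ 2*n := fun h => h2n (h ▸ F.aG)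
      rcases Nat.eq_or_lt_of_le ha1 with hae | hae
      · -- a = 2n-1, b = 4n-1 : but 2n+1 ∈ G in the gap interval
        rcases F.gapint _ h21 with h' | h' <;> omega
      · -- a = 2n+1
        have hae2 : a = 2*n+1 := by omega
        -- every e ≥ 4n+2 in G equals 6n+1
        have htail : ∀ e ∈ G, 4*n+2 ≤ e → e = 6*n+1 := by
          intro e he hbig
          have he2 : e - 2*n ∈ G := by
            rcases hgap e he (2*n) (e - 2*n) (by omega) (by omega) (by omega) with h' | h'
            · exact absurd h' h2n
            · exact h'
          have := F.gapint _ he2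
          have := hFle e he
          omega
        have hsub : G ⊆ Finset.Icc 1 (2*n-1) ∪ {2*n+1, 4*n+1, 6*n+1} := by
          intro w hw
          have h1 := hnm0 w hw
          have h7 := hFle w hw
          have hint := F.gapint w hw
          have hw2n : w ≠ 2*n := fun h => h2n (h ▸ hw)
          simp only [Finset.mem_union, Finset.mem_Icc, Finset.mem_insert, Finset.mem_singleton]
          rcases hint with h' | h'
          · rcases Nat.lt_or_ge w (2*n) with hc | hc
            · left; omega
            · right; left; omega
          · rcases Nat.lt_or_ge w (4*n+2) with hc | hc
            · right; right; left; omega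
            · right; right; right; exact htail w hw hc
        have hcard2 := Finset.card_le_card hsub
        have : (Finset.Icc 1 (2*n-1) ∪ {2*n+1, 4*n+1, 6*n+1}).card ≤ 2*n + 2 := by
          refine le_trans (Finset.card_union_le _ _) ?_
          have h1' : (Finset.Icc 1 (2*n-1)).card = 2*n-1 := by rw [Nat.card_Icc]; omega
          have h2' : ({2*n+1, 4*n+1, 6*n+1} : Finset ℕ).card ≤ 3 :=
            le_trans (Finset.card_insert_le _ _)
              (by simp [Finset.card_insert_le _ _]; exact Nat.lt_of_le_of_lt (Finset.card_insert_le _ _) (by simp))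
          omega
        omega
    -- main case
    have ha41 : a = 4*n+1 := by
      have h1 : 4*n+1 ≤ a := by
        rcases F.gapint _ h41 with h' | h' <;> omega
      have h2 : a + 2*n ≤ 6*n+1 := hFle _ F.bG
      omega
    have h61 : 6*n+1 ∈ G := by
      have := F.bG
      rwa [ha41, show 4*n+1 + 2*n = 6*n+1 by omega] at this
    have hint2 : ∀ w ∈ G, w ≤ 4*n+1 ∨ w = 6*n+1 := by
      intro w hw
      have := F.gapint w hw
      have := hFle w hw
      omega
    have hpairs : ∀ x, 2*n+2 ≤ x → x ≤ 4*n-1 → x ∉ G → 6*n+1 - x ∈ G := by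
      intro x hx1 hx2 hx3
      rcases hgap _ h61 x (6*n+1-x) (by omega) (by omega) (by omega) with h' | h'
      · exact absurd h' hx3
      · exact h'
    -- M and its card
    set M := G ∩ Finset.Icc (2*n+2) (4*n-1) with hM
    have hGdecomp : G = (Finset.Icc 1 (2*n-1) ∪ {2*n+1, 4*n+1, 6*n+1}) ∪ M := by
      ext w
      simp only [hM, Finset.mem_union, Finset.mem_Icc, Finset.mem_insert, Finset.mem_singleton,
        Finset.mem_inter]
      constructor
      · intro hw
        have h1 := hnm0 w hw
        have hi := hint2 w hw
        have hw2n : w ≠ 2*n := fun h => h2n (h ▸ hw)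
        have hw4n : w ≠ 4*n := fun h => h4n (h ▸ hw)
        rcases Nat.lt_or_ge w (2*n) with hc | hc
        · exact Or.inl (Or.inl ⟨by omega, by omega⟩)
        · rcases Nat.lt_or_ge w (2*n+2) with hc2 | hc2
          · exact Or.inl (Or.inr (Or.inl (by omega)))
          · rcases Nat.lt_or_ge w (4*n) with hc3 | hc3
            · exact Or.inr ⟨hw, by omega, by omega⟩
            · exact Or.inl (Or.inr (Or.inr (by omega)))
      · rintro ((⟨h1, h2⟩ | h | h | h) | ⟨h, _⟩)
        · exact F.base w (by omega) (by omega)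
        · exact h ▸ h21
        · exact h ▸ h41
        · exact h ▸ h61
        · exact h
    have hMcard : M.card = n - 1 := by
      have hdisj : Disjoint (Finset.Icc 1 (2*n-1) ∪ {2*n+1, 4*n+1, 6*n+1}) M := by
        rw [Finset.disjoint_left]
        intro w hw hw2
        simp only [hM, Finset.mem_inter, Finset.mem_Icc] at hw2
        simp only [Finset.mem_union, Finset.mem_Icc, Finset.mem_insert,
          Finset.mem_singleton] at hw
        omega
      have hdisj2 : Disjoint (Finset.Icc 1 (2*n-1)) ({2*n+1, 4*n+1, 6*n+1} : Finset ℕ) := by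
        rw [Finset.disjoint_left]
        intro w hw hw2
        simp only [Finset.mem_Icc] at hw
        simp only [Finset.mem_insert, Finset.mem_singleton] at hw2
        omega
      have h3c : ({2*n+1, 4*n+1, 6*n+1} : Finset ℕ).card = 3 := by
        rw [Finset.card_insert_of_notMem (by simp; omega),
          Finset.card_insert_of_notMem (by simp; omega), Finset.card_singleton]
      have := hcard
      rw [hGdecomp, Finset.card_union_of_disjoint hdisj,
        Finset.card_union_of_disjoint hdisj2, h3c, Nat.card_Icc] at this
      omega
    -- image of φ equals M
    have hWcard : (W n).card = n - 1 := by simp only [W, Nat.card_Icc]; omega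
    classical
    set φ : ℕ → ℕ := fun x => if x ∈ G then x else 6*n+1 - x with hφ
    have himgsub : (W n).image φ ⊆ M := by
      intro w hw
      simp only [Finset.mem_image, W, Finset.mem_Icc] at hw
      obtain ⟨x, ⟨hx1, hx2⟩, hx3⟩ := hw
      simp only [hM, Finset.mem_inter, Finset.mem_Icc]
      by_cases hxG : x ∈ G
      · simp only [hφ, if_pos hxG] at hx3
        exact ⟨hx3 ▸ hxG, by omega, by omega⟩
      · simp only [hφ, if_neg hxG] at hx3
        exact ⟨hx3 ▸ hpairs x (by omega) (by omega) hxG, by omega, by omega⟩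
    have himgcard : ((W n).image φ).card = n - 1 := by
      rw [Finset.card_image_of_injOn, hWcard]
      intro x hx y hy he
      simp only [Finset.coe_Icc, Set.mem_Icc, W] at hx hy
      simp only [hφ] at he
      split_ifs at he <;> omega
    have himg : (W n).image φ = M :=
      Finset.eq_of_subset_of_card_le himgsub (by omega)
    have hnotboth : ∀ x, 2*n+2 ≤ x → x ≤ 3*n → x ∈ G → 6*n+1 - x ∈ G → False := by
      intro x hx1 hx2 hxG hpG
      have hmem : 6*n+1 - x ∈ M := by
        simp only [hM, Finset.mem_inter, Finset.mem_Icc]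
        exact ⟨hpG, by omega, by omega⟩
      rw [← himg] at hmem
      simp only [Finset.mem_image, W, Finset.mem_Icc] at hmem
      obtain ⟨x', ⟨ha', hb'⟩, he'⟩ := hmem
      by_cases hx'G : x' ∈ G
      · simp only [hφ, if_pos hx'G] at he'
        omega
      · simp only [hφ, if_neg hx'G] at he'
        have : x' = x := by omega
        exact hx'G (this ▸ hxG)
    -- final extensionality
    ext w
    constructor
    · intro hw
      rw [mem_Ecal hLsub]
      have h1 := hnm0 w hw
      have hi := hint2 w hw
      have hw2n : w ≠ 2*n := fun h => h2n (h ▸ hw)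
      have hw4n : w ≠ 4*n := fun h => h4n (h ▸ hw)
      rcases Nat.lt_or_ge w (2*n) with hc | hc
      · exact Or.inl ⟨by omega, by omega⟩
      · rcases Nat.lt_or_ge w (2*n+2) with hc2 | hc2
        · exact Or.inr (Or.inl (by omega))
        · rcases Nat.lt_or_ge w (3*n+1) with hc3 | hc3
          · exact Or.inr (Or.inr (Or.inr (Or.inr (Or.inl
              (Finset.mem_inter.mpr ⟨hw, by simp only [W, Finset.mem_Icc]; omega⟩)))))
          · rcases Nat.lt_or_ge w (4*n) with hc4 | hc4
            · -- w ∈ [3n+1, 4n-1] : partner form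
              refine Or.inr (Or.inr (Or.inr (Or.inr (Or.inr ⟨6*n+1 - w, by omega, by omega,
                ?_, by omega⟩))))
              intro hmem
              have hxG : 6*n+1 - w ∈ G := (Finset.mem_inter.mp hmem).1
              exact hnotboth (6*n+1-w) (by omega) (by omega) hxG
                (by rw [show 6*n+1 - (6*n+1 - w) = w by omega]; exact hw)
            · rcases hi with h' | h'
              · exact Or.inr (Or.inr (Or.inl (by omega)))
              · exact Or.inr (Or.inr (Or.inr (Or.inl h')))
    · intro hw
      rw [mem_Ecal hLsub] at hw
      rcases hw with h | h | h | h | h | ⟨x, hx1, hx2, hx3, hx4⟩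
      · exact F.base w (by omega) (by omega)
      · exact h ▸ h21
      · exact h ▸ h41
      · exact h ▸ h61
      · exact (Finset.mem_inter.mp h).1
      · -- partner
        have hxG : x ∉ G := by
          intro hxG
          exact hx3 (Finset.mem_inter.mpr ⟨hxG, by simp only [W, Finset.mem_Icc]; omega⟩)
        have := hpairs x (by omega) (by omega) hxG
        exact hx4 ▸ this

end S19

namespace S19

lemma Bcal_complete {n : ℕ} {G : Finset ℕ} {a : ℕ} (hn : 0 < n) (F : Fx (2*n+1) G a)
    (hcard : G.card = 3*n+2) (h2n : 2*n+1 ∉ G) (h41 : 4*n+1 ∈ G) :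
    G = Bcal n (G ∩ W n) := by
  have hgap := F.gap.2
  have hFle : ∀ ℓ ∈ G, ℓ ≤ 6*n+3 := fun ℓ hl => by
    have := F.Fle ℓ hl; omega
  have hmeq : mult G = 2*n+1 := by
    have := F.mge
    by_contra h
    exact h2n (F.mem_of_lt_mult (by omega) (by omega))
  have h42 : 4*n+2 ∉ G := by
    intro h
    rcases hgap _ h (2*n+1) (2*n+1) (by omega) (by omega) (by omega) with h' | h' <;> exact h2n h'
  have h63 : 6*n+3 ∉ G := by
    intro h
    rcases hgap _ h (2*n+1) (4*n+2) (by omega) (by omega) (by omega) with h' | h'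
    · exact h2n h'
    · exact h42 h'
  have hLsub : G ∩ W n ⊆ W n := Finset.inter_subset_right
  have hnm0 : ∀ w ∈ G, 1 ≤ w := by
    intro w hw
    rcases Nat.eq_zero_or_pos w with h0 | h0
    · exact absurd (h0 ▸ hw) F.gap.1
    · omega
  -- locate the jump : a = 4n+1
  have hb : 4*n+1 < a + (2*n+1) := by
    by_contra hb2
    push_neg at hb2
    -- a ≤ 2n, a ≥ 2n → a = 2n
    have ha1 : 2*n ≤ a := by have := F.mlea; have := F.mge; omega
    have hae : a = 2*n := by omega
    have htail : ∀ e ∈ G, 4*n+2 ≤ e → e = 6*n+2 := by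
      intro e he hbig
      have he2 : e - (2*n+1) ∈ G := by
        rcases hgap e he (2*n+1) (e - (2*n+1)) (by omega) (by omega) (by omega) with h' | h'
        · exact absurd h' h2n
        · exact h'
      have hi := F.gapint _ he2
      have := hFle e he
      have hene : e - (2*n+1) ≠ 4*n+2 := fun h => h42 (h ▸ he2)
      omega
    have hsub : G ⊆ Finset.Icc 1 (2*n) ∪ {4*n+1, 6*n+2} := by
      intro w hw
      have h1 := hnm0 w hw
      have h7 := hFle w hw
      have hint := F.gapint w hw
      simp only [Finset.mem_union, Finset.mem_Icc, Finset.mem_insert, Finset.mem_singleton]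
      rcases hint with h' | h'
      · left; omega
      · rcases Nat.lt_or_ge w (4*n+2) with hc | hc
        · right; left; omega
        · right; right; exact htail w hw hc
    have hcard2 := Finset.card_le_card hsub
    have : (Finset.Icc 1 (2*n) ∪ {4*n+1, 6*n+2}).card ≤ 2*n + 2 := by
      refine le_trans (Finset.card_union_le _ _) ?_
      have h1' : (Finset.Icc 1 (2*n)).card = 2*n := by rw [Nat.card_Icc]; omega
      have h2' : ({4*n+1, 6*n+2} : Finset ℕ).card ≤ 2 :=
        le_trans (Finset.card_insert_le _ _) (by simp)
      omega
    omega
  have ha41 : a = 4*n+1 := by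
    have h1 : 4*n+1 ≤ a := by
      rcases F.gapint _ h41 with h' | h' <;> omega
    have h2 : a + (2*n+1) ≤ 6*n+3 := hFle _ F.bG
    have hane : a ≠ 4*n+2 := fun h => h42 (h ▸ F.aG)
    omega
  have h62 : 6*n+2 ∈ G := by
    have := F.bG
    rwa [ha41, show 4*n+1 + (2*n+1) = 6*n+2 by omega] at this
  have hint2 : ∀ w ∈ G, w ≤ 4*n+1 ∨ w = 6*n+2 := by
    intro w hw
    have := F.gapint w hw
    have := hFle w hw
    have : w ≠ 6*n+3 := fun h => h63 (h ▸ hw)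
    omega
  have hpairs : ∀ x, 2*n+2 ≤ x → x ≤ 4*n → x ∉ G → 6*n+2 - x ∈ G := by
    intro x hx1 hx2 hx3
    rcases hgap _ h62 x (6*n+2-x) (by omega) (by omega) (by omega) with h' | h'
    · exact absurd h' hx3
    · exact h'
  have h31 : 3*n+1 ∈ G := by
    by_contra h
    have := hpairs (3*n+1) (by omega) (by omega) h
    rw [show 6*n+2 - (3*n+1) = 3*n+1 by omega] at this
    exact h this
  set M := G ∩ Finset.Icc (2*n+2) (4*n) with hM
  have hGdecomp : G = (Finset.Icc 1 (2*n) ∪ {4*n+1, 6*n+2}) ∪ M := by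
    ext w
    simp only [hM, Finset.mem_union, Finset.mem_Icc, Finset.mem_insert, Finset.mem_singleton,
      Finset.mem_inter]
    constructor
    · intro hw
      have h1 := hnm0 w hw
      have hi := hint2 w hw
      have hw21 : w ≠ 2*n+1 := fun h => h2n (h ▸ hw)
      rcases Nat.lt_or_ge w (2*n+1) with hc | hc
      · exact Or.inl (Or.inl ⟨by omega, by omega⟩)
      · rcases Nat.lt_or_ge w (4*n+1) with hc2 | hc2
        · exact Or.inr ⟨hw, by omega, by omega⟩
        · exact Or.inl (Or.inr (by omega))
    · rintro ((⟨h1, h2⟩ | h | h) | ⟨h, _⟩)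
      · exact F.base w (by omega) (by omega)
      · exact h ▸ h41
      · exact h ▸ h62
      · exact h
  have hMcard : M.card = n := by
    have hdisj : Disjoint (Finset.Icc 1 (2*n) ∪ {4*n+1, 6*n+2}) M := by
      rw [Finset.disjoint_left]
      intro w hw hw2
      simp only [hM, Finset.mem_inter, Finset.mem_Icc] at hw2
      simp only [Finset.mem_union, Finset.mem_Icc, Finset.mem_insert,
        Finset.mem_singleton] at hw
      omega
    have hdisj2 : Disjoint (Finset.Icc 1 (2*n)) ({4*n+1, 6*n+2} : Finset ℕ) := by
      rw [Finset.disjoint_left]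
      intro w hw hw2
      simp only [Finset.mem_Icc] at hw
      simp only [Finset.mem_insert, Finset.mem_singleton] at hw2
      omega
    have h2c : ({4*n+1, 6*n+2} : Finset ℕ).card = 2 := by
      rw [Finset.card_insert_of_notMem (by simp; omega), Finset.card_singleton]
    have := hcard
    rw [hGdecomp, Finset.card_union_of_disjoint hdisj,
      Finset.card_union_of_disjoint hdisj2, h2c, Nat.card_Icc] at this
    omega
  classical
  set W' := Finset.Icc (2*n+2) (3*n+1) with hW'
  have hW'card : W'.card = n := by simp only [hW', Nat.card_Icc]; omega
  set φ : ℕ → ℕ := fun x => if x ∈ G then x else 6*n+2 - x with hφ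
  have himgsub : W'.image φ ⊆ M := by
    intro w hw
    simp only [Finset.mem_image, hW', Finset.mem_Icc] at hw
    obtain ⟨x, ⟨hx1, hx2⟩, hx3⟩ := hw
    simp only [hM, Finset.mem_inter, Finset.mem_Icc]
    by_cases hxG : x ∈ G
    · simp only [hφ, if_pos hxG] at hx3
      exact ⟨hx3 ▸ hxG, by omega, by omega⟩
    · simp only [hφ, if_neg hxG] at hx3
      exact ⟨hx3 ▸ hpairs x (by omega) (by omega) hxG, by omega, by omega⟩
  have himgcard : (W'.image φ).card = n := by
    rw [Finset.card_image_of_injOn, hW'card]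
    intro x hx y hy he
    simp only [Finset.coe_Icc, Set.mem_Icc, hW'] at hx hy
    simp only [hφ] at he
    split_ifs at he <;> omega
  have himg : W'.image φ = M :=
    Finset.eq_of_subset_of_card_le himgsub (by omega)
  have hnotboth : ∀ x, 2*n+2 ≤ x → x ≤ 3*n → x ∈ G → 6*n+2 - x ∈ G → False := by
    intro x hx1 hx2 hxG hpG
    have hmem : 6*n+2 - x ∈ M := by
      simp only [hM, Finset.mem_inter, Finset.mem_Icc]
      exact ⟨hpG, by omega, by omega⟩
    rw [← himg] at hmem
    simp only [Finset.mem_image, hW', Finset.mem_Icc] at hmem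
    obtain ⟨x', ⟨ha', hb'⟩, he'⟩ := hmem
    by_cases hx'G : x' ∈ G
    · simp only [hφ, if_pos hx'G] at he'
      omega
    · simp only [hφ, if_neg hx'G] at he'
      have : x' = x := by omega
      exact hx'G (this ▸ hxG)
  ext w
  constructor
  · intro hw
    rw [mem_Bcal hLsub]
    have h1 := hnm0 w hw
    have hi := hint2 w hw
    have hw21 : w ≠ 2*n+1 := fun h => h2n (h ▸ hw)
    have hw42 : w ≠ 4*n+2 := fun h => h42 (h ▸ hw)
    rcases Nat.lt_or_ge w (2*n+1) with hc | hc
    · exact Or.inl ⟨by omega, by omega⟩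
    · rcases Nat.lt_or_ge w (3*n+1) with hc2 | hc2
      · exact Or.inr (Or.inr (Or.inr (Or.inr (Or.inl
          (Finset.mem_inter.mpr ⟨hw, by simp only [W, Finset.mem_Icc]; omega⟩)))))
      · rcases Nat.eq_or_lt_of_le hc2 with hc3 | hc3
        · exact Or.inr (Or.inl (by omega))
        · rcases Nat.lt_or_ge w (4*n+1) with hc4 | hc4
          · -- w ∈ [3n+2, 4n] : partner form
            refine Or.inr (Or.inr (Or.inr (Or.inr (Or.inr ⟨6*n+2 - w, by omega, by omega,
              ?_, by omega⟩))))
            intro hmem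
            have hxG : 6*n+2 - w ∈ G := (Finset.mem_inter.mp hmem).1
            exact hnotboth (6*n+2-w) (by omega) (by omega) hxG
              (by rw [show 6*n+2 - (6*n+2 - w) = w by omega]; exact hw)
          · rcases hi with h' | h'
            · exact Or.inr (Or.inr (Or.inl (by omega)))
            · exact Or.inr (Or.inr (Or.inr (Or.inl h')))
  · intro hw
    rw [mem_Bcal hLsub] at hw
    rcases hw with h | h | h | h | h | ⟨x, hx1, hx2, hx3, hx4⟩
    · exact F.base w (by omega) (by omega)
    · exact h ▸ h31
    · exact h ▸ h41
    · exact h ▸ h62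
    · exact (Finset.mem_inter.mp h).1
    · have hxG : x ∉ G := by
        intro hxG
        exact hx3 (Finset.mem_inter.mpr ⟨hxG, by simp only [W, Finset.mem_Icc]; omega⟩)
      have := hpairs x (by omega) (by omega) hxG
      exact hx4 ▸ this

end S19

namespace S19

open Classical in
noncomputable def fAB (n : ℕ) (G : Finset ℕ) : Finset ℕ :=
  if 2*n ∉ G ∧ 4*n+1 ∈ G then Bcal n (G ∩ W n) else sig (lastJ (2*n) G) G

open Classical in
noncomputable def fBA (n : ℕ) (G : Finset ℕ) : Finset ℕ :=
  if 2*n+1 ∉ G ∧ 4*n+1 ∈ G then Ecal n (G ∩ W n) else psi (lastJ (2*n+1) G) G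

def Aset (n : ℕ) : Set (Finset ℕ) :=
  {G : Finset ℕ | IsGapset G ∧ PureSparse (2 * n) G ∧ G.card = 3 * n + 1}

def Bset (n : ℕ) : Set (Finset ℕ) :=
  {G : Finset ℕ | IsGapset G ∧ PureSparse (2 * n + 1) G ∧ G.card = 3 * n + 2}

lemma fAB_mapsTo {n : ℕ} (hn : 0 < n) : ∀ G ∈ Aset n, fAB n G ∈ Bset n := by
  rintro G ⟨hg, hp, hc⟩
  have F := mkFx (κ := 2*n) (by omega) hg hp
  rw [fAB]
  split_ifs with h
  · have hL : G ∩ W n ⊆ W n := Finset.inter_subset_right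
    exact ⟨Bcal_gapset hn hL, Bcal_pure hn hL, Bcal_card hn hL⟩
  · refine ⟨sig_gapset hn F hc h, ?_, ?_⟩
    · exact sig_pure F
    · rw [card_sig F, hc]

lemma fBA_mapsTo {n : ℕ} (hn : 0 < n) : ∀ G ∈ Bset n, fBA n G ∈ Aset n := by
  rintro G ⟨hg, hp, hc⟩
  have F := mkFx (κ := 2*n+1) (by omega) hg hp
  rw [fBA]
  split_ifs with h
  · have hL : G ∩ W n ⊆ W n := Finset.inter_subset_right
    exact ⟨Ecal_gapset hn hL, Ecal_pure hn hL, Ecal_card hn hL⟩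
  · have haj : Consec G (lastJ (2*n+1) G) (lastJ (2*n+1) G + (2*n+1)) :=
      ⟨F.aG, F.bG, by omega, F.gapint⟩
    have huniq : ∀ c, Consec G c (c + (2*n+1)) → c = lastJ (2*n+1) G := by
      intro c hcc
      exact jumpB_unique hn F hc hcc haj
    refine ⟨psi_gapset hn F hc h, psi_pure hn F huniq, ?_⟩
    have := card_psi F
    omega

lemma fAB_injOn {n : ℕ} (hn : 0 < n) : Set.InjOn (fAB n) (Aset n) := by
  rintro G1 hG1 G2 hG2 he
  obtain ⟨hg1, hp1, hc1⟩ := hG1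
  obtain ⟨hg2, hp2, hc2⟩ := hG2
  have F1 := mkFx (κ := 2*n) (by omega) hg1 hp1
  have F2 := mkFx (κ := 2*n) (by omega) hg2 hp2
  rw [fAB, fAB] at he
  split_ifs at he with h1 h2 h2
  · -- both exceptional
    have hL1 : G1 ∩ W n ⊆ W n := Finset.inter_subset_right
    have hL2 : G2 ∩ W n ⊆ W n := Finset.inter_subset_right
    have hLe : G1 ∩ W n = G2 ∩ W n := by
      have e1 := Bcal_inter_W hn hL1
      have e2 := Bcal_inter_W hn hL2
      rw [← e1, ← e2, he]
    rw [Ecal_complete hn F1 hc1 h1.1 h1.2, Ecal_complete hn F2 hc2 h2.1 h2.2, hLe]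
  · -- exceptional vs regular : contradiction
    exfalso
    have hcond := Bcal_cond hn (show G1 ∩ W n ⊆ W n from Finset.inter_subset_right)
    rw [he] at hcond
    exact sig_notE hn F2 hc2 hcond
  · exfalso
    have hcond := Bcal_cond hn (show G2 ∩ W n ⊆ W n from Finset.inter_subset_right)
    rw [← he] at hcond
    exact sig_notE hn F1 hc1 hcond
  · -- both regular
    -- the image is in Bset; use uniqueness of the (2n+1)-jump there
    have hS1 : IsGapset (sig (lastJ (2*n) G1) G1) := sig_gapset hn F1 hc1 h1
    have hS1p : PureSparse (2*n+1) (sig (lastJ (2*n) G1) G1) := sig_pure F1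
    have hS1c : (sig (lastJ (2*n) G1) G1).card = 3*n+2 := by rw [card_sig F1, hc1]
    have FS := mkFx (κ := 2*n+1) (by omega) hS1 hS1p
    have hj1 : Consec (sig (lastJ (2*n) G1) G1) (lastJ (2*n) G1 + 1)
        ((lastJ (2*n) G1 + 1) + (2*n+1)) := by
      have := sig_jump_consec F1
      rwa [show lastJ (2*n) G1 + 2*n + 2 = (lastJ (2*n) G1 + 1) + (2*n+1) by omega] at this
    have hj2 : Consec (sig (lastJ (2*n) G1) G1) (lastJ (2*n) G2 + 1)
        ((lastJ (2*n) G2 + 1) + (2*n+1)) := by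
      rw [he]
      have := sig_jump_consec F2
      rwa [show lastJ (2*n) G2 + 2*n + 2 = (lastJ (2*n) G2 + 1) + (2*n+1) by omega] at this
    have haeq : lastJ (2*n) G1 = lastJ (2*n) G2 := by
      have := jumpB_unique hn FS hS1c hj1 hj2
      omega
    rw [haeq] at he F1
    exact Finset.Subset.antisymm
      (sig_inj_aux F1 F2 (le_of_eq he))
      (sig_inj_aux F2 F1 (le_of_eq he.symm))

lemma fBA_injOn {n : ℕ} (hn : 0 < n) : Set.InjOn (fBA n) (Bset n) := by
  rintro G1 hG1 G2 hG2 he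
  obtain ⟨hg1, hp1, hc1⟩ := hG1
  obtain ⟨hg2, hp2, hc2⟩ := hG2
  have F1 := mkFx (κ := 2*n+1) (by omega) hg1 hp1
  have F2 := mkFx (κ := 2*n+1) (by omega) hg2 hp2
  rw [fBA, fBA] at he
  split_ifs at he with h1 h2 h2
  · have hL1 : G1 ∩ W n ⊆ W n := Finset.inter_subset_right
    have hL2 : G2 ∩ W n ⊆ W n := Finset.inter_subset_right
    have hLe : G1 ∩ W n = G2 ∩ W n := by
      have e1 := Ecal_inter_W hn hL1
      have e2 := Ecal_inter_W hn hL2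
      rw [← e1, ← e2, he]
    rw [Bcal_complete hn F1 hc1 h1.1 h1.2, Bcal_complete hn F2 hc2 h2.1 h2.2, hLe]
  · exfalso
    have hcond := Ecal_cond hn (show G1 ∩ W n ⊆ W n from Finset.inter_subset_right)
    rw [he] at hcond
    exact psi_notE hn F2 hc2 hcond
  · exfalso
    have hcond := Ecal_cond hn (show G2 ∩ W n ⊆ W n from Finset.inter_subset_right)
    rw [← he] at hcond
    exact psi_notE hn F1 hc1 hcond
  · -- both regular
    set a1 := lastJ (2*n+1) G1
    set a2 := lastJ (2*n+1) G2
    have key : ∀ (H1 H2 : Finset ℕ) (b1 b2 : ℕ), Fx (2*n+1) H1 b1 → Fx (2*n+1) H2 b2 →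
        H1.card = 3*n+2 → H2.card = 3*n+2 → psi b1 H1 = psi b2 H2 → b1 < b2 → False := by
      intro H1 H2 b1 b2 K1 K2 kc1 kc2 khe hlt
      have hjc := psi_jump_consec (by omega) K2
      rw [← khe] at hjc
      obtain ⟨c, d, hcd, hc2, hue, hve⟩ := consec_psi K1 hjc
      have hb2 : 1 ≤ b2 := by
        have := K2.mge; have := K2.mlea; omega
      split_ifs at hue hve with i1 i2 i2
      · -- c ≤ b1 : c - 1 = b2 - 1 → c = b2 ≤ b1 contradiction
        omega
      · omega
      · -- c > b1, d ≤ b1 impossible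
        have := hcd.2.2.1; omega
      · -- c > b1, d > b1 : 2n-jump late in H1
        have hceq : c = b2 + 1 := by omega
        have hdeq : d = c + 2*n := by
          have h2n2 : b2 + (2*n+1) - 2 = b2 + 2*n - 1 := by omega
          omega
        have hcb : b1 + (2*n+1) ≤ c := by
          rcases K1.gapint c hcd.1 with h' | h' <;> omega
        exact no_late_2n hn K1 kc1 (hdeq ▸ hcd) hcb
    rcases Nat.lt_trichotomy a1 a2 with h | h | h
    · exact absurd (key G1 G2 a1 a2 F1 F2 hc1 hc2 he h) not_false
    · rw [h] at he F1
      exact Finset.Subset.antisymm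
        (psi_inj_aux F1 F2 (le_of_eq he))
        (psi_inj_aux F2 F1 (le_of_eq he.symm))
    · exact absurd (key G2 G1 a2 a1 F2 F1 hc2 hc1 he.symm h) not_false

lemma Aset_finite {n : ℕ} (hn : 0 < n) : (Aset n).Finite := by
  apply Set.Finite.subset (Finset.finite_toSet ((Finset.range (6*n+2)).powerset))
  rintro G ⟨hg, hp, hc⟩
  simp only [Finset.coe_powerset, Set.mem_preimage, Set.mem_powerset_iff, Finset.coe_subset,
    Finset.mem_coe, Finset.mem_powerset]
  intro w hw
  have hne : G.Nonempty := by
    rw [← Finset.card_pos, hc]; omega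
  have h1 := frob_le_two_card hg hne
  have h2 := le_frob hw
  rw [Finset.mem_range]
  omega

lemma Bset_finite {n : ℕ} (hn : 0 < n) : (Bset n).Finite := by
  apply Set.Finite.subset (Finset.finite_toSet ((Finset.range (6*n+4)).powerset))
  rintro G ⟨hg, hp, hc⟩
  simp only [Finset.coe_powerset, Set.mem_preimage, Set.mem_powerset_iff, Finset.coe_subset,
    Finset.mem_coe, Finset.mem_powerset]
  intro w hw
  have hne : G.Nonempty := by
    rw [← Finset.card_pos, hc]; omega
  have h1 := frob_le_two_card hg hne
  have h2 := le_frob hw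
  rw [Finset.mem_range]
  omega

end S19


theorem stmt19 (n : ℕ) (hn : 0 < n) :
    {G : Finset ℕ | IsGapset G ∧ PureSparse (2 * n) G ∧ G.card = 3 * n + 1}.ncard =
    {G : Finset ℕ | IsGapset G ∧ PureSparse (2 * n + 1) G ∧ G.card = 3 * n + 2}.ncard := by
  have h1 : (S19.Aset n).ncard ≤ (S19.Bset n).ncard :=
    Set.ncard_le_ncard_of_injOn _ (S19.fAB_mapsTo hn) (S19.fAB_injOn hn) (S19.Bset_finite hn)
  have h2 : (S19.Bset n).ncard ≤ (S19.Aset n).ncard :=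
    Set.ncard_le_ncard_of_injOn _ (S19.fBA_mapsTo hn) (S19.fBA_injOn hn) (S19.Aset_finite hn)
  exact le_antisymm h1 h2
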